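/- arXiv:1309.7967 — 7 statements merged into one kernel-verified Lean document; each statement's English description precedes it below -/
import Mathlib

section
/- Let n ≥ 3 and x ∈ 𝒳^n. For each l ∈ {1, ..., n-1}, the equalities x_l = x_{l+1} and x_1···x_l = x_{l+1} + ... + x_n cannot hold simultaneously. -/
/-- Membership in the set `𝒳^n`: `x 1 + ⋯ + x n = 1`, `1 ≥ x 1 ≥ ⋯ ≥ x n ≥ 0`, and
the product-sum inequalities `x 1 ⋯ x j ≤ x (j+1) + ⋯ + x n` for `1 ≤ j ≤ n-1`. -/
def memChi (n : ℕ) (x : ℕ → ℝ) : Prop :=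
  (∑ i ∈ Finset.Icc 1 n, x i = 1) ∧ x 1 ≤ 1 ∧
  (∀ i, 1 ≤ i → i < n → x (i + 1) ≤ x i) ∧ 0 ≤ x n ∧
  (∀ j, 1 ≤ j → j ≤ n - 1 →
    (∏ i ∈ Finset.Icc 1 j, x i) ≤ ∑ i ∈ Finset.Icc (j + 1) n, x i)

/-- For `n ≥ 3`, `x ∈ 𝒳^n` and `1 ≤ l ≤ n-1`, the equalities `x l = x (l+1)` and `x 1 ⋯ x l = x (l+1) + ⋯ + x n` cannot hold simultaneously. -/
theorem chi_not_simultaneous_equality (n : ℕ) (hn : 3 ≤ n) (x : ℕ → ℝ)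
    (hx : memChi n x) :
    ∀ l, 1 ≤ l → l ≤ n - 1 →
      ¬ (x l = x (l + 1) ∧
        (∏ i ∈ Finset.Icc 1 l, x i) = ∑ i ∈ Finset.Icc (l + 1) n, x i) := by
  obtain ⟨hsum, hx1, hmono, hxn, hineq⟩ := hx
  have hmono' : ∀ i j, 1 ≤ i → i ≤ j → j ≤ n → x j ≤ x i := by
    intro i j h1 hij hjn
    induction j, hij using Nat.le_induction with
    | base => exact le_refl _
    | succ m hm ih =>
      exact le_trans (hmono m (le_trans h1 hm) (by omega)) (ih (by omega))
  have hnn : ∀ i, 1 ≤ i → i ≤ n → 0 ≤ x i := fun i h1 h2 =>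
    le_trans hxn (hmono' i n h1 h2 le_rfl)
  have hle1 : ∀ i, 1 ≤ i → i ≤ n → x i ≤ 1 := fun i h1 h2 =>
    le_trans (hmono' 1 i le_rfl h1 h2) hx1
  have hprodle : ∀ l, 1 ≤ l → l ≤ n → (∏ i ∈ Finset.Icc 1 l, x i) ≤ x l := by
    intro l h1 h2
    obtain ⟨m, rfl⟩ : ∃ m, l = m + 1 := ⟨l - 1, by omega⟩
    rw [Finset.prod_Icc_succ_top (by omega : 1 ≤ m + 1)]
    have h01 : (∏ i ∈ Finset.Icc 1 m, x i) ≤ 1 := by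
      apply Finset.prod_le_one
      · intro i hi
        rw [Finset.mem_Icc] at hi
        exact hnn i hi.1 (by omega)
      · intro i hi
        rw [Finset.mem_Icc] at hi
        exact hle1 i hi.1 (by omega)
    exact mul_le_of_le_one_left (hnn (m + 1) (by omega) h2) h01
  -- if some x j = 0 (j ≤ n - 1), then x 1 = 0
  have hzero : ∀ j, 1 ≤ j → j ≤ n - 1 → x j = 0 → x 1 = 0 := by
    intro j h1
    induction j, h1 using Nat.le_induction with
    | base => exact fun _ h => h
    | succ m hm ih =>
      intro hmn hxm
      have hS : (∑ i ∈ Finset.Icc (m + 1 + 1) n, x i) = 0 := by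
        apply Finset.sum_eq_zero
        intro i hi
        rw [Finset.mem_Icc] at hi
        have := hmono' (m + 1) i (by omega) (by omega) hi.2
        have := hnn i (by omega) hi.2
        linarith [hxm ▸ hmono' (m + 1) i (by omega) (by omega) hi.2]
      have hc := hineq (m + 1) (by omega) hmn
      rw [hS] at hc
      -- also the term x (m+1) itself is 0, but we need the sum from m+2; redo: use constraint at m
      have hS' : (∑ i ∈ Finset.Icc (m + 1) n, x i) = 0 := by
        apply Finset.sum_eq_zero
        intro i hi
        rw [Finset.mem_Icc] at hi
        have h1 := hmono' (m + 1) i (by omega) hi.1 hi.2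
        have h2 := hnn i (by omega) hi.2
        rw [hxm] at h1
        linarith
      have hc' := hineq m hm (by omega)
      rw [hS'] at hc'
      have hP0 : (∏ i ∈ Finset.Icc 1 m, x i) = 0 := by
        have : (0:ℝ) ≤ ∏ i ∈ Finset.Icc 1 m, x i := by
          apply Finset.prod_nonneg
          intro i hi
          rw [Finset.mem_Icc] at hi
          exact hnn i hi.1 (by omega)
        linarith
      rw [Finset.prod_eq_zero_iff] at hP0
      obtain ⟨i, hi, hxi⟩ := hP0
      rw [Finset.mem_Icc] at hi
      have hxm0 : x m = 0 := by
        have h1 := hmono' i m hi.1 hi.2 (by omega)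
        have h2 := hnn m hm (by omega)
        rw [hxi] at h1
        linarith
      exact ih (by omega) hxm0
  rintro l hl1 hln ⟨heq, hps⟩
  have hl1n : l + 1 ≤ n := by omega
  rcases eq_or_lt_of_le (hnn (l + 1) (by omega) hl1n) with ht0 | ht
  · -- x (l+1) = 0
    have hx10 : x 1 = 0 := hzero l hl1 hln (by rw [heq, ← ht0])
    have : (∑ i ∈ Finset.Icc 1 n, x i) = 0 := by
      apply Finset.sum_eq_zero
      intro i hi
      rw [Finset.mem_Icc] at hi
      have h1 := hmono' 1 i le_rfl hi.1 hi.2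
      have h2 := hnn i hi.1 hi.2
      rw [hx10] at h1
      linarith
    rw [this] at hsum
    norm_num at hsum
  · -- x (l+1) > 0
    have hPpos : 0 < ∏ i ∈ Finset.Icc 1 l, x i := by
      apply Finset.prod_pos
      intro i hi
      rw [Finset.mem_Icc] at hi
      have h1 := hmono' i l hi.1 hi.2 (by omega)
      rw [heq] at h1
      linarith
    have hPle : (∏ i ∈ Finset.Icc 1 l, x i) ≤ x (l + 1) := heq ▸ hprodle l hl1 (by omega)
    rcases (by omega : l + 1 ≤ n - 1 ∨ l = n - 1) with hcase | hcase
    · -- l ≤ n - 2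
      have hc := hineq (l + 1) (by omega) hcase
      rw [Finset.prod_Icc_succ_top (by omega : 1 ≤ l + 1)] at hc
      have hsplit : (∑ i ∈ Finset.Icc (l + 1) n, x i)
          = x (l + 1) + ∑ i ∈ Finset.Icc (l + 1 + 1) n, x i := by
        have hset : Finset.Icc (l + 1) n = insert (l + 1) (Finset.Icc (l + 1 + 1) n) := by
          ext a
          simp only [Finset.mem_Icc, Finset.mem_insert]
          omega
        rw [hset, Finset.sum_insert (by simp [Finset.mem_Icc])]
      rw [hsplit] at hps
      have hmul : 0 < (∏ i ∈ Finset.Icc 1 l, x i) * x (l + 1) := mul_pos hPpos ht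
      linarith
    · -- l = n - 1
      have hln' : l + 1 = n := by omega
      rw [hln'] at hps
      rw [Finset.Icc_self, Finset.sum_singleton] at hps
      obtain ⟨m, rfl⟩ : ∃ m, l = m + 1 := ⟨l - 1, by omega⟩
      have hm1 : 1 ≤ m := by omega
      rw [Finset.prod_Icc_succ_top (by omega : 1 ≤ m + 1)] at hps
      have hxn' : x n = x (m + 1 + 1) := by rw [hln']
      have hxl : x (m + 1) = x (m + 1 + 1) := heq
      have hPm1 : (∏ i ∈ Finset.Icc 1 m, x i) = 1 := by
        rw [hxl, hxn'] at hps
        have h' : (∏ i ∈ Finset.Icc 1 m, x i) * x (m + 1 + 1) = 1 * x (m + 1 + 1) := by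
          rw [one_mul]; exact hps
        exact mul_right_cancel₀ (ne_of_gt ht) h'
      have hxm1 : 1 ≤ x m := le_trans (le_of_eq hPm1.symm) (hprodle m hm1 (by omega))
      have hx1ge : 1 ≤ x 1 := le_trans hxm1 (hmono' 1 m le_rfl hm1 (by omega))
      -- sum over {1, n} is at most the full sum
      have hsub : ({1, n} : Finset ℕ) ⊆ Finset.Icc 1 n := by
        intro a ha
        simp only [Finset.mem_insert, Finset.mem_singleton] at ha
        rw [Finset.mem_Icc]
        omega
      have hpair : (∑ i ∈ ({1, n} : Finset ℕ), x i) ≤ ∑ i ∈ Finset.Icc 1 n, x i := by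
        apply Finset.sum_le_sum_of_subset_of_nonneg hsub
        intro i hi _
        rw [Finset.mem_Icc] at hi
        exact hnn i hi.1 hi.2
      rw [Finset.sum_pair (by omega : (1:ℕ) ≠ n)] at hpair
      have hxnpos : 0 < x n := by rw [hxn']; exact ht
      linarith [hsum ▸ hpair]
end

section
/- Let n ≥ 3 and x ∈ 𝒳^n. If for some l ∈ {1, ..., n-1} the equality x_1···x_i = x_{i+1} + ... + x_n holds for every i ∈ {1, ..., l}, then x_i = 1/s_i for every i ∈ {1, ..., l}, where (s_i) is the Sylvester sequence. -/
/-- For `n ≥ 3`, `x ∈ 𝒳^n`: if the product-sum inequalities are equalities for all `i ≤ l`, then `x i = 1 / s i` for all `i ≤ l` (`s` the Sylvester sequence). -/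
theorem chi_equality_forces_sylvester (n : ℕ) (hn : 3 ≤ n) (x : ℕ → ℝ)
    (hx : memChi n x) (s : ℕ → ℕ) (hs1 : s 1 = 2)
    (hs : ∀ i, 2 ≤ i → s i = (∏ j ∈ Finset.Icc 1 (i - 1), s j) + 1)
    (l : ℕ) (hl1 : 1 ≤ l) (hl2 : l ≤ n - 1)
    (heq : ∀ i, 1 ≤ i → i ≤ l →
      (∏ j ∈ Finset.Icc 1 i, x j) = ∑ j ∈ Finset.Icc (i + 1) n, x j) :
    ∀ i, 1 ≤ i → i ≤ l → x i = 1 / (s i : ℝ) := by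
  obtain ⟨hsum, hx1, hmono, hxn, hineq⟩ := hx
  have hs1le : ∀ j, 1 ≤ j → 1 ≤ s j := by
    intro j hj
    by_cases h2 : 2 ≤ j
    · rw [hs j h2]; omega
    · have hj1 : j = 1 := by omega
      rw [hj1, hs1]; omega
  have hQpos : ∀ i, (0:ℝ) < ∏ j ∈ Finset.Icc 1 i, (s j : ℝ) := by
    intro i
    apply Finset.prod_pos
    intro j hj
    have h1 := hs1le j (Finset.mem_Icc.mp hj).1
    have : (1:ℝ) ≤ (s j : ℝ) := by exact_mod_cast h1
    linarith
  have hsplit : ∀ i, i ≤ n →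
      (∑ j ∈ Finset.Icc 1 i, x j) + (∑ j ∈ Finset.Icc (i+1) n, x j) = 1 := by
    intro i hi
    rw [← hsum]
    rw [show Finset.Icc 1 i = Finset.Ioc 0 i from Finset.Icc_add_one_left_eq_Ioc 0 i,
        show Finset.Icc (i+1) n = Finset.Ioc i n from Finset.Icc_add_one_left_eq_Ioc i n,
        show Finset.Icc 1 n = Finset.Ioc 0 n from Finset.Icc_add_one_left_eq_Ioc 0 n]
    exact Finset.sum_Ioc_consecutive x (Nat.zero_le i) hi
  have hkey : ∀ i, 1 ≤ i → i ≤ l →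
      (∏ j ∈ Finset.Icc 1 i, x j) = 1 - ∑ j ∈ Finset.Icc 1 i, x j := by
    intro i h1 h2
    have := hsplit i (by omega)
    rw [heq i h1 h2]
    linarith
  have main : ∀ i, 1 ≤ i → i ≤ l → x i = 1 / (s i : ℝ) ∧
      (∏ j ∈ Finset.Icc 1 i, x j) = (∏ j ∈ Finset.Icc 1 i, (s j : ℝ))⁻¹ := by
    intro i hi
    induction i, hi using Nat.le_induction with
    | base =>
      intro _
      have h1 := hkey 1 le_rfl hl1
      simp only [Finset.Icc_self, Finset.prod_singleton, Finset.sum_singleton] at h1 ⊢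
      rw [hs1]
      norm_num
      linarith
    | succ i hi ih =>
      intro hil
      obtain ⟨hxi, hP⟩ := ih (by omega)
      set Q : ℝ := ∏ j ∈ Finset.Icc 1 i, (s j : ℝ) with hQdef
      have hQp := hQpos i
      have hki := hkey i hi (by omega)
      have hki1 := hkey (i+1) (by omega) hil
      rw [Finset.prod_Icc_succ_top (by omega : 1 ≤ i + 1),
          Finset.sum_Icc_succ_top (by omega : 1 ≤ i + 1), hP] at hki1
      have hx1eq : x (i+1) * (Q⁻¹ + 1) = Q⁻¹ := by
        have hPi : (∏ j ∈ Finset.Icc 1 i, x j) = Q⁻¹ := hP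
        rw [hPi] at hki
        nlinarith [hki, hki1]
      have hscast : (s (i+1) : ℝ) = Q + 1 := by
        have h2 : s (i+1) = (∏ j ∈ Finset.Icc 1 i, s j) + 1 := by
          have := hs (i+1) (by omega)
          simpa using this
        rw [h2]
        push_cast
        rw [hQdef]
      have hQne : Q ≠ 0 := ne_of_gt hQp
      have hxval : x (i+1) = 1 / (s (i+1) : ℝ) := by
        rw [hscast]
        field_simp at hx1eq ⊢
        rw [eq_div_iff (ne_of_gt (by rw [hQdef]; linarith))]
        linarith [hx1eq]
      refine ⟨hxval, ?_⟩
      rw [Finset.prod_Icc_succ_top (by omega : 1 ≤ i + 1),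
          Finset.prod_Icc_succ_top (by omega : 1 ≤ i + 1), hP, hxval,
          mul_inv, one_div]
  intro i h1 h2
  exact (main i h1 h2).1
end

section
/- Consider two sequences g_1 ≥ g_2 ≥ ... ≥ g_n > 0 and h_1 ≥ h_2 ≥ ... ≥ h_n > 0 of real numbers such that h_1···h_j ≤ g_1···g_j for every j ∈ {1, ..., n}. Then h_1 + ... + h_n ≤ g_1 + ... + g_n, with equality if and only if g_i = h_i for every i. -/
open Finset

private lemma anti_of_step (n : ℕ) (h : ℕ → ℝ)
    (hm : ∀ i, 1 ≤ i → i < n → h (i + 1) ≤ h i) :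
    ∀ i j, 1 ≤ i → i ≤ j → j ≤ n → h j ≤ h i := by
  intro i j hi hij
  induction j, hij using Nat.le_induction with
  | base => intro _; exact le_refl _
  | succ j hij ih =>
    intro hjn
    exact le_trans (hm j (le_trans hi hij) (by omega)) (ih (by omega))

private lemma abel_nonneg : ∀ (n : ℕ) (h d : ℕ → ℝ),
    (∀ i, 1 ≤ i → i ≤ n → 0 ≤ h i) →
    (∀ i, 1 ≤ i → i < n → h (i + 1) ≤ h i) →
    (∀ j, 1 ≤ j → j ≤ n → 0 ≤ ∑ i ∈ Icc 1 j, d i) →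
    0 ≤ ∑ i ∈ Icc 1 n, h i * d i := by
  intro n
  induction n with
  | zero => intro h d _ _ _; simp
  | succ n ih =>
    intro h d hpos hmono hD
    have key : ∑ i ∈ Icc 1 (n+1), h i * d i
        = (∑ i ∈ Icc 1 n, (h i - h (n+1)) * d i)
          + h (n+1) * ∑ i ∈ Icc 1 (n+1), d i := by
      have e1 : ∀ i ∈ Icc 1 (n+1), h i * d i
          = (h i - h (n+1)) * d i + h (n+1) * d i := fun i _ => by ring
      rw [Finset.sum_congr rfl e1, Finset.sum_add_distrib, ← Finset.mul_sum]
      congr 1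
      rw [Finset.sum_Icc_succ_top (by omega : 1 ≤ n+1)]
      simp
    rw [key]
    have h1 : 0 ≤ ∑ i ∈ Icc 1 n, (h i - h (n+1)) * d i := by
      apply ih (fun i => h i - h (n+1)) d
      · intro i hi hin
        have := anti_of_step (n+1) h hmono i (n+1) hi (by omega) (le_refl _)
        linarith
      · intro i hi hin
        have := hmono i hi (by omega)
        linarith
      · intro j hj hjn
        exact hD j hj (by omega)
    have h2 : 0 ≤ h (n+1) * ∑ i ∈ Icc 1 (n+1), d i :=
      mul_nonneg (hpos (n+1) (by omega) (le_refl _)) (hD (n+1) (by omega) (le_refl _))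
    linarith

private lemma pointwise (a b : ℝ) (ha : 0 < a) (hb : 0 < b) :
    b * (Real.log a - Real.log b) ≤ a - b ∧
    (a ≠ b → b * (Real.log a - Real.log b) < a - b) := by
  have hlog : Real.log a - Real.log b = Real.log (a / b) := by
    rw [Real.log_div ha.ne' hb.ne']
  constructor
  · have := Real.log_le_sub_one_of_pos (div_pos ha hb)
    rw [hlog]
    calc b * Real.log (a / b) ≤ b * (a / b - 1) := by
          exact mul_le_mul_of_nonneg_left this hb.le
      _ = a - b := by field_simp
  · intro hab
    have hne : a / b ≠ 1 := by
      intro hcon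
      exact hab (by field_simp at hcon; linarith)
    have := Real.log_lt_sub_one_of_pos (div_pos ha hb) hne
    rw [hlog]
    calc b * Real.log (a / b) < b * (a / b - 1) := by
          exact mul_lt_mul_of_pos_left this hb
      _ = a - b := by field_simp

/-- Soundararajan's proposition (a consequence of Muirhead's inequality): for two
decreasing sequences of positive reals `g 1 ≥ ⋯ ≥ g n > 0`, `h 1 ≥ ⋯ ≥ h n > 0`
with `h 1 ⋯ h j ≤ g 1 ⋯ g j` for every `j ≤ n`, one has
`h 1 + ⋯ + h n ≤ g 1 + ⋯ + g n`, with equality iff `g i = h i` for every `i`. -/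
theorem sum_le_sum_of_partial_prod_le (n : ℕ) (g h : ℕ → ℝ)
    (hgpos : ∀ i, 1 ≤ i → i ≤ n → 0 < g i)
    (hhpos : ∀ i, 1 ≤ i → i ≤ n → 0 < h i)
    (hgmono : ∀ i, 1 ≤ i → i < n → g (i + 1) ≤ g i)
    (hhmono : ∀ i, 1 ≤ i → i < n → h (i + 1) ≤ h i)
    (hprod : ∀ j, 1 ≤ j → j ≤ n →
      (∏ i ∈ Finset.Icc 1 j, h i) ≤ ∏ i ∈ Finset.Icc 1 j, g i) :
    (∑ i ∈ Finset.Icc 1 n, h i ≤ ∑ i ∈ Finset.Icc 1 n, g i) ∧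
    ((∑ i ∈ Finset.Icc 1 n, h i = ∑ i ∈ Finset.Icc 1 n, g i) ↔
      ∀ i, 1 ≤ i → i ≤ n → g i = h i) := by
  set d : ℕ → ℝ := fun i => Real.log (g i) - Real.log (h i) with hd
  have hDnn : ∀ j, 1 ≤ j → j ≤ n → 0 ≤ ∑ i ∈ Icc 1 j, d i := by
    intro j hj hjn
    have hlg : ∑ i ∈ Icc 1 j, Real.log (g i) = Real.log (∏ i ∈ Icc 1 j, g i) := by
      rw [Real.log_prod]
      intro i hi
      simp only [mem_Icc] at hi
      exact (hgpos i hi.1 (le_trans hi.2 hjn)).ne'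
    have hlh : ∑ i ∈ Icc 1 j, Real.log (h i) = Real.log (∏ i ∈ Icc 1 j, h i) := by
      rw [Real.log_prod]
      intro i hi
      simp only [mem_Icc] at hi
      exact (hhpos i hi.1 (le_trans hi.2 hjn)).ne'
    have hp : (0:ℝ) < ∏ i ∈ Icc 1 j, h i := by
      apply Finset.prod_pos
      intro i hi
      simp only [mem_Icc] at hi
      exact hhpos i hi.1 (le_trans hi.2 hjn)
    have := Real.log_le_log hp (hprod j hj hjn)
    simp only [hd, Finset.sum_sub_distrib, hlg, hlh]
    linarith
  have hS : 0 ≤ ∑ i ∈ Icc 1 n, h i * d i := by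
    apply abel_nonneg n h d
    · intro i hi hin; exact (hhpos i hi hin).le
    · exact hhmono
    · exact hDnn
  have hpt : ∀ i ∈ Icc 1 n, h i * d i ≤ g i - h i := by
    intro i hi
    simp only [mem_Icc] at hi
    exact (pointwise (g i) (h i) (hgpos i hi.1 hi.2) (hhpos i hi.1 hi.2)).1
  have hsum : ∑ i ∈ Icc 1 n, h i * d i ≤ ∑ i ∈ Icc 1 n, (g i - h i) :=
    Finset.sum_le_sum hpt
  have hmain : ∑ i ∈ Icc 1 n, h i ≤ ∑ i ∈ Icc 1 n, g i := by
    rw [Finset.sum_sub_distrib] at hsum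
    linarith
  refine ⟨hmain, ?_, ?_⟩
  · intro heq
    intro i hi hin
    by_contra hne
    have hstrict : h i * d i < g i - h i :=
      (pointwise (g i) (h i) (hgpos i hi hin) (hhpos i hi hin)).2 hne
    have hlt : ∑ i ∈ Icc 1 n, h i * d i < ∑ i ∈ Icc 1 n, (g i - h i) := by
      apply Finset.sum_lt_sum hpt ⟨i, Finset.mem_Icc.mpr ⟨hi, hin⟩, hstrict⟩
    rw [Finset.sum_sub_distrib, heq] at hlt
    linarith
  · intro hall
    exact Finset.sum_congr rfl (fun i hi => by
      simp only [mem_Icc] at hi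
      exact (hall i hi.1 hi.2).symm)
end

section
/- Let x_1, ..., x_k (k ∈ ℕ) be positive real numbers satisfying x_1 + ... + x_k < 1, x_1 ≥ x_2 ≥ ... ≥ x_k, and x_1···x_j ≤ 1 - (x_1 + ... + x_j) for every j ∈ {1, ..., k}. Then x_1 + ... + x_k ≤ 1/s_1 + ... + 1/s_k, with equality if and only if x_i = 1/s_i for every i ∈ {1, ..., k}, where (s_i) is the Sylvester sequence. -/
/-- greedy value function -/
noncomputable def Lam : ℕ → ℝ → ℝ → ℝ → ℝ
  | 0, T, _, _ => T
  | (m+1), T, P, a => Lam m (T - min a (T/(1+P))) (P * min a (T/(1+P))) (min a (T/(1+P)))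

/-- greedy moves -/
noncomputable def grd : ℕ → ℝ → ℝ → ℝ → ℝ
  | 0, T, P, a => min a (T/(1+P))
  | (i+1), T, P, a => grd i (T - min a (T/(1+P))) (P * min a (T/(1+P))) (min a (T/(1+P)))

/-- pure binding iterate -/
noncomputable def Bet : ℕ → ℝ → ℝ
  | 0, W => W
  | (q+1), W => Bet q (W*W/(1+W))

lemma Lam_zero (T P a : ℝ) : Lam 0 T P a = T := rfl
lemma Lam_succ (m : ℕ) (T P a : ℝ) :
    Lam (m+1) T P a = Lam m (T - min a (T/(1+P))) (P * min a (T/(1+P))) (min a (T/(1+P))) := rfl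
lemma grd_zero (T P a : ℝ) : grd 0 T P a = min a (T/(1+P)) := rfl
lemma grd_succ (i : ℕ) (T P a : ℝ) :
    grd (i+1) T P a = grd i (T - min a (T/(1+P))) (P * min a (T/(1+P))) (min a (T/(1+P))) := rfl
lemma Bet_zero (W : ℝ) : Bet 0 W = W := rfl
lemma Bet_succ (q : ℕ) (W : ℝ) : Bet (q+1) W = Bet q (W*W/(1+W)) := rfl

lemma bet_pos : ∀ (q : ℕ) (W : ℝ), 0 < W → 0 < Bet q W := by
  intro q
  induction q with
  | zero => intro W h; simpa [Bet_zero] using h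
  | succ q ih =>
    intro W h
    have h1 : (0:ℝ) < 1 + W := by linarith
    have : 0 < W*W/(1+W) := by positivity
    rw [Bet_succ]; exact ih _ this

lemma bet_mono : ∀ (q : ℕ) (W W' : ℝ), 0 < W → W ≤ W' → Bet q W ≤ Bet q W' := by
  intro q
  induction q with
  | zero => intro W W' _ h; simpa [Bet_zero] using h
  | succ q ih =>
    intro W W' hW h
    have h1 : (0:ℝ) < 1 + W := by linarith
    have h2 : (0:ℝ) < 1 + W' := by linarith
    have key : W*W/(1+W) ≤ W'*W'/(1+W') := by
      rw [div_le_div_iff₀ h1 h2]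
      nlinarith [mul_nonneg (sub_nonneg.2 h) (by nlinarith : (0:ℝ) ≤ W + W' + W*W')]
    have hp : 0 < W*W/(1+W) := by positivity
    rw [Bet_succ, Bet_succ]; exact ih _ _ hp key

lemma bet_strict : ∀ (q : ℕ) (W W' : ℝ), 0 < W → W < W' → Bet q W < Bet q W' := by
  intro q
  induction q with
  | zero => intro W W' _ h; simpa [Bet_zero] using h
  | succ q ih =>
    intro W W' hW h
    have h1 : (0:ℝ) < 1 + W := by linarith
    have h2 : (0:ℝ) < 1 + W' := by linarith
    have key : W*W/(1+W) < W'*W'/(1+W') := by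
      rw [div_lt_div_iff₀ h1 h2]
      nlinarith [mul_pos (sub_pos.2 h) (by nlinarith : (0:ℝ) < W + W' + W*W')]
    have hp : 0 < W*W/(1+W) := by positivity
    rw [Bet_succ, Bet_succ]; exact ih _ _ hp key

lemma ratio_mono {u v : ℝ} (hu : 0 ≤ u) (huv : u ≤ v) : u/(1+u) ≤ v/(1+v) := by
  rw [div_le_div_iff₀ (by linarith) (by linarith)]
  nlinarith

lemma pure_lam : ∀ (q : ℕ) (W b : ℝ), 0 < W → W/(1+W) ≤ b → Lam q W W b = Bet q W := by
  intro q
  induction q with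
  | zero => intro W b _ _; rfl
  | succ q ih =>
    intro W b hW hb
    have h1 : (0:ℝ) < 1 + W := by linarith
    have hmin : min b (W/(1+W)) = W/(1+W) := min_eq_right hb
    have hW2 : W - W/(1+W) = W*W/(1+W) := by field_simp; ring
    have hW3 : W * (W/(1+W)) = W*W/(1+W) := by ring
    have hWp : 0 < W*W/(1+W) := by positivity
    have hble : (W*W/(1+W))/(1+W*W/(1+W)) ≤ W/(1+W) := by
      have hXW : W*W/(1+W) ≤ W := by
        rw [div_le_iff₀ h1]; nlinarith
      exact ratio_mono hWp.le hXW
    rw [Lam_succ, hmin, hW2, hW3, ih _ _ hWp hble, Bet_succ]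

lemma pow_diff_le : ∀ (r : ℕ) (t t' : ℝ), 0 ≤ t → t ≤ t' →
    t*(t'^r - t^r) ≤ r*(t'-t)*t'^r := by
  intro r
  induction r with
  | zero => intro t t' ht h; simp
  | succ r ih =>
    intro t t' ht h
    have ht' : 0 ≤ t' := ht.trans h
    have h1 : t*(t'^(r+1) - t^(r+1)) = t'*(t*(t'^r - t^r)) + (t*t^r)*(t'-t) := by ring
    have h2 : t'*(t*(t'^r - t^r)) ≤ t'*(r*(t'-t)*t'^r) :=
      mul_le_mul_of_nonneg_left (ih t t' ht h) ht'
    have h3 : t*t^r ≤ t'*t'^r :=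
      mul_le_mul h (pow_le_pow_left₀ ht h r) (pow_nonneg ht r) ht'
    have h4 : (t*t^r)*(t'-t) ≤ (t'*t'^r)*(t'-t) :=
      mul_le_mul_of_nonneg_right h3 (by linarith)
    have : ((r:ℝ)+1)*(t'-t)*t'^(r+1) = t'*(r*(t'-t)*t'^r) + (t'*t'^r)*(t'-t) := by ring
    push_cast
    rw [h1, this]
    linarith

lemma pow_diff_lt : ∀ (r : ℕ) (t t' : ℝ), 0 < t → t < t' →
    t*(t'^(r+1) - t^(r+1)) < (r+1)*(t'-t)*t'^(r+1) := by
  intro r t t' ht h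
  have ht' : 0 < t' := ht.trans h
  have h1 : t*(t'^(r+1) - t^(r+1)) = t'*(t*(t'^r - t^r)) + (t*t^r)*(t'-t) := by ring
  have h2 : t'*(t*(t'^r - t^r)) ≤ t'*(r*(t'-t)*t'^r) :=
    mul_le_mul_of_nonneg_left (pow_diff_le r t t' ht.le h.le) ht'.le
  have h3 : t*t^r < t'*t'^r := by
    have := pow_le_pow_left₀ ht.le h.le r
    have hp : (0:ℝ) < t^r := pow_pos ht r
    nlinarith
  have h4 : (t*t^r)*(t'-t) < (t'*t'^r)*(t'-t) :=
    mul_lt_mul_of_pos_right h3 (by linarith)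
  have h5 : ((r:ℝ)+1)*(t'-t)*t'^(r+1) = t'*(r*(t'-t)*t'^r) + (t'*t'^r)*(t'-t) := by ring
  push_cast
  rw [h1, h5]
  linarith

/-- core algebraic inequality for the binding-regime value. -/
lemma U_ineq {K α α' t t' T : ℝ} (hα : 0 < α) (hαα : α ≤ α') (ht : 0 < t)
    (htt : t ≤ t') (hT : T ≤ (K+1)*t + t*α) (h3 : t*(α'-α) ≤ K*(t'-t)*α') :
    (T-K*t')*α'/(1+α') ≤ (T-K*t)*α/(1+α) := by
  have hα' : 0 < α' := hα.trans_le hαα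
  rw [div_le_div_iff₀ (by linarith) (by linarith)]
  have h1 : (T-K*t)*α*(1+α') - (T-K*t')*α'*(1+α)
      = T*(α-α') + K*(t'*α' - t*α) + K*(α*α')*(t'-t) := by ring
  have h2 : T*(α-α') ≥ ((K+1)*t + t*α)*(α-α') :=
    mul_le_mul_of_nonpos_right hT (by linarith)
  have h4 : ((K+1)*t + t*α)*(α-α') + K*(t'*α' - t*α) + K*(α*α')*(t'-t)
      = (1+α)*(t*(α-α') + K*(t'-t)*α') := by ring
  have h5 : 0 ≤ t*(α-α') + K*(t'-t)*α' := by linarith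
  nlinarith [mul_nonneg (by linarith : (0:ℝ) ≤ 1+α) h5]

lemma U_ineq_strict {K α α' t t' T : ℝ} (hα : 0 < α) (hαα : α ≤ α') (ht : 0 < t)
    (htt : t ≤ t') (hT : T ≤ (K+1)*t + t*α) (h3 : t*(α'-α) < K*(t'-t)*α') :
    (T-K*t')*α'/(1+α') < (T-K*t)*α/(1+α) := by
  have hα' : 0 < α' := hα.trans_le hαα
  rw [div_lt_div_iff₀ (by linarith) (by linarith)]
  have h1 : (T-K*t)*α*(1+α') - (T-K*t')*α'*(1+α)
      = T*(α-α') + K*(t'*α' - t*α) + K*(α*α')*(t'-t) := by ring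
  have h2 : T*(α-α') ≥ ((K+1)*t + t*α)*(α-α') :=
    mul_le_mul_of_nonpos_right hT (by linarith)
  have h4 : ((K+1)*t + t*α)*(α-α') + K*(t'*α' - t*α) + K*(α*α')*(t'-t)
      = (1+α)*(t*(α-α') + K*(t'-t)*α') := by ring
  have h5 : 0 < t*(α-α') + K*(t'-t)*α' := by linarith
  nlinarith [mul_pos (by linarith : (0:ℝ) < 1+α) h5]

/-- flat step evaluation -/
lemma flat_eval (m r : ℕ) (T P z : ℝ) (hP : 0 < P) (hz : 0 < z)
    (hq : 0 ≤ T - ((r:ℝ)+2)*z - P*z^(r+2)) :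
    Lam (m+1) (T-((r:ℝ)+1)*z) (P*z^(r+1)) z = Lam m (T-((r:ℝ)+2)*z) (P*z^(r+2)) z := by
  have hPz : 0 < P*z^(r+1) := by positivity
  have hd : (0:ℝ) < 1 + P*z^(r+1) := by linarith
  have hle : z ≤ (T-((r:ℝ)+1)*z)/(1+P*z^(r+1)) := by
    rw [le_div_iff₀ hd]
    have : z*(1+P*z^(r+1)) = z + P*z^(r+2) := by ring
    linarith [this]
  rw [Lam_succ, min_eq_left hle]
  have e1 : T-((r:ℝ)+1)*z - z = T-((r:ℝ)+2)*z := by ring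
  have e2 : P*z^(r+1)*z = P*z^(r+2) := by ring
  rw [e1, e2]

/-- bind step evaluation -/
lemma bind_eval (m r : ℕ) (T P z : ℝ) (hP : 0 < P) (hz : 0 < z)
    (hPzTz : P*z^(r+1) ≤ T-((r:ℝ)+1)*z)
    (hq : T - ((r:ℝ)+2)*z - P*z^(r+2) ≤ 0) :
    Lam (m+1) (T-((r:ℝ)+1)*z) (P*z^(r+1)) z
      = Bet m ((T-((r:ℝ)+1)*z)*(P*z^(r+1))/(1+P*z^(r+1))) := by
  set Tz := T-((r:ℝ)+1)*z with hTzdef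
  set Pz := P*z^(r+1) with hPzdef
  have hPz : 0 < Pz := by positivity
  have hTz : 0 < Tz := lt_of_lt_of_le hPz hPzTz
  have hd : (0:ℝ) < 1 + Pz := by linarith
  have hcaple : Tz/(1+Pz) ≤ z := by
    rw [div_le_iff₀ hd]
    have : z*(1+Pz) = z + P*z^(r+2) := by rw [hPzdef]; ring
    linarith [this]
  set W := Tz*Pz/(1+Pz) with hWdef
  have hW : 0 < W := by positivity
  have hdW : (0:ℝ) < 1 + W := by linarith
  have e1 : Tz - Tz/(1+Pz) = W := by rw [hWdef]; field_simp; ring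
  have e2 : Pz * (Tz/(1+Pz)) = W := by rw [hWdef]; ring
  have h6 : Pz*Pz ≤ Pz*Tz := mul_le_mul_of_nonneg_left hPzTz hPz.le
  have hPzW : Pz - 1 ≤ W := by
    rw [hWdef, le_div_iff₀ hd]; nlinarith
  have hWcap : W/(1+W) ≤ Tz/(1+Pz) := by
    rw [div_le_div_iff₀ hdW hd]
    have eW : W*(1+Pz) = Tz*Pz := by rw [hWdef]; field_simp
    rw [eW]
    have : Pz ≤ 1 + W := by linarith
    calc Tz*Pz ≤ Tz*(1+W) := mul_le_mul_of_nonneg_left this hTz.le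
      _ = Tz*(1+W) := rfl
  rw [Lam_succ, min_eq_right hcaple, e1, e2]
  exact pure_lam m W _ hW hWcap

lemma Mlem : ∀ (m r : ℕ) (T P t t' : ℝ), 0 < P → 0 < t → t ≤ t' →
    t'*(1+P*t'^r) ≤ T - r*t' →
    (Lam m (T-((r:ℝ)+1)*t') (P*t'^(r+1)) t' ≤ Lam m (T-((r:ℝ)+1)*t) (P*t^(r+1)) t)
    ∧ (t < t' → Lam m (T-((r:ℝ)+1)*t') (P*t'^(r+1)) t' < Lam m (T-((r:ℝ)+1)*t) (P*t^(r+1)) t) := by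
  intro m
  induction m with
  | zero =>
    intro r T P t t' hP ht htt hleg
    constructor
    · simp only [Lam_zero]
      nlinarith [mul_le_mul_of_nonneg_left htt (by positivity : (0:ℝ) ≤ (r:ℝ)+1)]
    · intro hlt
      simp only [Lam_zero]
      nlinarith [mul_lt_mul_of_pos_left hlt (by positivity : (0:ℝ) < (r:ℝ)+1)]
  | succ m ih =>
    intro r T P t t' hP ht htt hleg
    have ht' : 0 < t' := ht.trans_le htt
    -- basic facts
    have hPt'T : P*t'^(r+1) ≤ T-((r:ℝ)+1)*t' := by
      have : t'*(1+P*t'^r) = t' + P*t'^(r+1) := by ring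
      rw [this] at hleg; linarith
    have hTt' : 0 < T-((r:ℝ)+1)*t' := lt_of_lt_of_le (by positivity) hPt'T
    have htt1 : ((r:ℝ)+1)*t ≤ ((r:ℝ)+1)*t' :=
      mul_le_mul_of_nonneg_left htt (by positivity)
    have hTt : 0 < T-((r:ℝ)+1)*t := by linarith
    have hpow : t^(r+1) ≤ t'^(r+1) := pow_le_pow_left₀ ht.le htt _
    have hpow2 : t^(r+2) ≤ t'^(r+2) := pow_le_pow_left₀ ht.le htt _
    have hPtt' : P*t^(r+1) ≤ P*t'^(r+1) := mul_le_mul_of_nonneg_left hpow hP.le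
    have hPtT : P*t^(r+1) ≤ T-((r:ℝ)+1)*t := le_trans (le_trans hPtt' hPt'T) (by linarith)
    rcases le_or_gt 0 (T - ((r:ℝ)+2)*t' - P*t'^(r+2)) with hqt' | hqt'
    · -- flat/flat
      have hqt : 0 ≤ T - ((r:ℝ)+2)*t - P*t^(r+2) := by
        nlinarith [mul_le_mul_of_nonneg_left hpow2 hP.le]
      rw [flat_eval m r T P t hP ht hqt, flat_eval m r T P t' hP ht' hqt']
      have hleg' : t'*(1+P*t'^(r+1)) ≤ T - ((r:ℝ)+1)*t' := by
        have : t'*(1+P*t'^(r+1)) = t' + P*t'^(r+2) := by ring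
        rw [this]; linarith
      have hthis := ih (r+1) T P t t' hP ht htt (by push_cast; exact hleg')
      push_cast at hthis
      simp only [show ((r:ℝ)+1)+1 = (r:ℝ)+2 from by ring, show r+1+1 = r+2 from rfl] at hthis
      exact hthis
    · rcases le_or_gt (T - ((r:ℝ)+2)*t - P*t^(r+2)) 0 with hqt | hqt
      · -- bind/bind
        rw [bind_eval m r T P t hP ht hPtT hqt,
            bind_eval m r T P t' hP ht' hPt'T (le_of_lt hqt')]
        have hα : 0 < P*t^(r+1) := by positivity
        have hα' : 0 < P*t'^(r+1) := by positivity
        have hUt' : 0 < (T-((r:ℝ)+1)*t')*(P*t'^(r+1))/(1+P*t'^(r+1)) := by positivity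
        have hTle : T ≤ (((r:ℝ)+1)+1)*t + t*(P*t^(r+1)) := by
          have : t*(P*t^(r+1)) = P*t^(r+2) := by ring
          rw [this]; linarith
        have h3 : t*(P*t'^(r+1) - P*t^(r+1)) ≤ ((r:ℝ)+1)*(t'-t)*(P*t'^(r+1)) := by
          have h := pow_diff_le (r+1) t t' ht.le htt
          have e1 : t*(P*t'^(r+1) - P*t^(r+1)) = P*(t*(t'^(r+1) - t^(r+1))) := by ring
          have e2 : ((r:ℝ)+1)*(t'-t)*(P*t'^(r+1)) = P*(((r:ℝ)+1)*(t'-t)*t'^(r+1)) := by ring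
          rw [e1, e2]
          have := mul_le_mul_of_nonneg_left h hP.le
          push_cast at this ⊢
          linarith
        constructor
        · exact bet_mono m _ _ hUt' (U_ineq hα hPtt' ht htt hTle h3)
        · intro hlt
          have h3' : t*(P*t'^(r+1) - P*t^(r+1)) < ((r:ℝ)+1)*(t'-t)*(P*t'^(r+1)) := by
            have h := pow_diff_lt r t t' ht hlt
            have e1 : t*(P*t'^(r+1) - P*t^(r+1)) = P*(t*(t'^(r+1) - t^(r+1))) := by ring
            have e2 : ((r:ℝ)+1)*(t'-t)*(P*t'^(r+1)) = P*(((r:ℝ)+1)*(t'-t)*t'^(r+1)) := by ring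
            rw [e1, e2]
            have := mul_lt_mul_of_pos_left h hP
            push_cast at this ⊢
            linarith
          exact bet_strict m _ _ hUt' (U_ineq_strict hα hPtt' ht htt hTle h3')
      · -- mixed: q t > 0 > q t'
        have hcont : ContinuousOn (fun z : ℝ => T - ((r:ℝ)+2)*z - P*z^(r+2)) (Set.Icc t t') :=
          Continuous.continuousOn (by continuity)
        have hmem : (0:ℝ) ∈ Set.Icc (T - ((r:ℝ)+2)*t' - P*t'^(r+2)) (T - ((r:ℝ)+2)*t - P*t^(r+2)) :=
          ⟨hqt'.le, hqt.le⟩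
        obtain ⟨τ, hτmem, hτ⟩ := intermediate_value_Icc' htt hcont hmem
        obtain ⟨htτ, hτt'⟩ := hτmem
        have hτpos : 0 < τ := lt_of_lt_of_le ht htτ
        have hqτ : T - ((r:ℝ)+2)*τ - P*τ^(r+2) = 0 := hτ
        have hτne : τ < t' := by
          have hne : τ ≠ t' := by
            intro h; rw [h] at hqτ; linarith
          exact lt_of_le_of_ne hτt' hne
        -- Lam (m+1) S(t) = Lam m S'(t)
        rw [flat_eval m r T P t hP ht hqt.le]
        -- facts about τ
        have hpowτ : τ^(r+1) ≤ t'^(r+1) := pow_le_pow_left₀ hτpos.le hτt' _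
        have hPτt' : P*τ^(r+1) ≤ P*t'^(r+1) := mul_le_mul_of_nonneg_left hpowτ hP.le
        have hτT : P*τ^(r+1) ≤ T-((r:ℝ)+1)*τ := by
          have : ((r:ℝ)+1)*τ ≤ ((r:ℝ)+1)*t' := mul_le_mul_of_nonneg_left hτt' (by positivity)
          linarith [le_trans hPτt' hPt'T]
        have eτ : P*τ^(r+2) = τ*(P*τ^(r+1)) := by ring
        have eTτ : T-((r:ℝ)+1)*τ = τ + P*τ^(r+2) := by linarith
        -- IH from t to τ at level r+1
        have hlegτ : τ*(1+P*τ^(r+1)) ≤ T - ((r:ℝ)+1)*τ := by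
          have h9 : τ*(1+P*τ^(r+1)) = τ + P*τ^(r+2) := by ring
          rw [h9]; linarith
        have hIH := ih (r+1) T P t τ hP ht htτ (by push_cast; exact hlegτ)
        push_cast at hIH
        simp only [show ((r:ℝ)+1)+1 = (r:ℝ)+2 from by ring, show r+1+1 = r+2 from rfl] at hIH
        -- Lam m S'(τ) = Bet m (P τ^(r+2)) : pure state
        have hW2 : 0 < P*τ^(r+2) := by positivity
        have eq1 : T-((r:ℝ)+2)*τ = P*τ^(r+2) := by linarith
        have hcapτ : (P*τ^(r+2))/(1+P*τ^(r+2)) ≤ τ := by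
          rw [div_le_iff₀ (by positivity)]
          have hPτc : 0 < P*τ^(r+1) := by positivity
          have hbb : P*τ^(r+1) ≤ τ + τ*(P*τ^(r+1)) := by
            rw [eτ] at eTτ; linarith
          rcases le_or_gt τ 1 with hτ1 | hτ1
          · have : P*τ^(r+1) - τ*(P*τ^(r+1)) ≤ τ := by linarith
            have h10 : P*τ^(r+1) ≤ 1 + τ*(P*τ^(r+1)) := by linarith
            calc P*τ^(r+2) = τ*(P*τ^(r+1)) := eτ
              _ ≤ τ*(1 + τ*(P*τ^(r+1))) := mul_le_mul_of_nonneg_left h10 hτpos.le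
              _ = τ*(1+P*τ^(r+2)) := by rw [eτ]
          · have h11 : 0 < (τ-1)*(P*τ^(r+1)) := mul_pos (by linarith) hPτc
            have h10 : P*τ^(r+1) ≤ 1 + τ*(P*τ^(r+1)) := by nlinarith
            calc P*τ^(r+2) = τ*(P*τ^(r+1)) := eτ
              _ ≤ τ*(1 + τ*(P*τ^(r+1))) := mul_le_mul_of_nonneg_left h10 hτpos.le
              _ = τ*(1+P*τ^(r+2)) := by rw [eτ]
        have hWτ : Lam m (T-((r:ℝ)+2)*τ) (P*τ^(r+2)) τ = Bet m (P*τ^(r+2)) := by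
          rw [eq1]; exact pure_lam m _ _ hW2 hcapτ
        -- U(τ) equals P τ^(r+2)
        have hUτeq : (T-((r:ℝ)+1)*τ)*(P*τ^(r+1))/(1+P*τ^(r+1)) = P*τ^(r+2) := by
          rw [eTτ, eτ]
          have hd : (0:ℝ) < 1 + P*τ^(r+1) := by positivity
          field_simp
        -- bind at t'
        have hbind' : Lam (m+1) (T-((r:ℝ)+1)*t') (P*t'^(r+1)) t'
            = Bet m ((T-((r:ℝ)+1)*t')*(P*t'^(r+1))/(1+P*t'^(r+1))) :=
          bind_eval m r T P t' hP ht' hPt'T hqt'.le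
        -- U inequality from τ to t' (strict since τ < t')
        have hUt'pos : 0 < (T-((r:ℝ)+1)*t')*(P*t'^(r+1))/(1+P*t'^(r+1)) :=
          div_pos (mul_pos hTt' (by positivity)) (by positivity)
        have hTleτ : T ≤ (((r:ℝ)+1)+1)*τ + τ*(P*τ^(r+1)) := by
          rw [← eτ]; linarith
        have h3τ : τ*(P*t'^(r+1) - P*τ^(r+1)) < ((r:ℝ)+1)*(t'-τ)*(P*t'^(r+1)) := by
          have h := pow_diff_lt r τ t' hτpos hτne
          have e1 : τ*(P*t'^(r+1) - P*τ^(r+1)) = P*(τ*(t'^(r+1) - τ^(r+1))) := by ring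
          have e2 : ((r:ℝ)+1)*(t'-τ)*(P*t'^(r+1)) = P*(((r:ℝ)+1)*(t'-τ)*t'^(r+1)) := by ring
          rw [e1, e2]
          have := mul_lt_mul_of_pos_left h hP
          push_cast at this ⊢
          linarith
        have hPτc : 0 < P*τ^(r+1) := by positivity
        have hUineq : (T-((r:ℝ)+1)*t')*(P*t'^(r+1))/(1+P*t'^(r+1)) < P*τ^(r+2) := by
          rw [← hUτeq]
          exact U_ineq_strict hPτc hPτt' hτpos hτt' hTleτ h3τ
        have hchain : Lam (m+1) (T-((r:ℝ)+1)*t') (P*t'^(r+1)) t'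
            < Lam m (T-((r:ℝ)+2)*t) (P*t^(r+2)) t := by
          rw [hbind']
          calc Bet m ((T-((r:ℝ)+1)*t')*(P*t'^(r+1))/(1+P*t'^(r+1)))
              < Bet m (P*τ^(r+2)) := bet_strict m _ _ hUt'pos hUineq
            _ = Lam m (T-((r:ℝ)+2)*τ) (P*τ^(r+2)) τ := hWτ.symm
            _ ≤ Lam m (T-((r:ℝ)+2)*t) (P*t^(r+2)) t := hIH.1
        exact ⟨hchain.le, fun _ => hchain⟩

lemma main_lemma : ∀ (m : ℕ) (T P a : ℝ) (f : ℕ → ℝ), 0 < P →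
    (∀ i, i < m → 0 < f i) →
    (∀ i, i+1 < m → f (i+1) ≤ f i) →
    (0 < m → f 0 ≤ a) →
    (∀ j, 0 < j → j ≤ m → P * ∏ i ∈ Finset.range j, f i ≤ T - ∑ i ∈ Finset.range j, f i) →
    Lam m T P a ≤ T - ∑ i ∈ Finset.range m, f i ∧
    (T - ∑ i ∈ Finset.range m, f i = Lam m T P a → ∀ i, i < m → f i = grd i T P a) := by
  intro m
  induction m with
  | zero =>
    intro T P a f _ _ _ _ _
    simp [Lam_zero]
  | succ m ih =>
    intro T P a f hP hpos hmono hcap hcons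
    have hf0 : 0 < f 0 := hpos 0 (by omega)
    have hd : (0:ℝ) < 1 + P := by linarith
    have hcons1 : P * f 0 ≤ T - f 0 := by
      have := hcons 1 (by omega) (by omega)
      simpa using this
    have hf0cap : f 0 ≤ T/(1+P) := by
      rw [le_div_iff₀ hd]; nlinarith
    set g := min a (T/(1+P)) with hgdef
    have hf0g : f 0 ≤ g := le_min (hcap (by omega)) hf0cap
    have hgcap : g ≤ T/(1+P) := min_le_right _ _
    have hgleg : g*(1+P) ≤ T := by
      rw [← le_div_iff₀ hd]; exact hgcap
    -- tail hypotheses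
    have hPf0 : 0 < P * f 0 := mul_pos hP hf0
    have htpos : ∀ i, i < m → 0 < f (i+1) := fun i hi => hpos (i+1) (by omega)
    have htmono : ∀ i, i+1 < m → f (i+1+1) ≤ f (i+1) := fun i hi => hmono (i+1) (by omega)
    have htcap : 0 < m → f 1 ≤ f 0 := fun h => hmono 0 (by omega)
    have htcons : ∀ j, 0 < j → j ≤ m →
        (P * f 0) * ∏ i ∈ Finset.range j, f (i+1) ≤ (T - f 0) - ∑ i ∈ Finset.range j, f (i+1) := by
      intro j hj hjm
      have := hcons (j+1) (by omega) (by omega)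
      rw [Finset.prod_range_succ', Finset.sum_range_succ'] at this
      nlinarith [this]
    have hIH := ih (T - f 0) (P * f 0) (f 0) (fun i => f (i+1)) hPf0 htpos htmono htcap htcons
    -- Mlem comparison between f 0 and g
    have hM := Mlem m 0 T P (f 0) g hP hf0 hf0g (by simpa using hgleg)
    simp only [Nat.cast_zero, zero_add, pow_one, one_mul, Nat.zero_add] at hM
    have hsum : ∑ i ∈ Finset.range (m+1), f i = (∑ i ∈ Finset.range m, f (i+1)) + f 0 :=
      Finset.sum_range_succ' f m
    have hLam : Lam (m+1) T P a = Lam m (T - g) (P * g) g := rfl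
    constructor
    · calc Lam (m+1) T P a = Lam m (T - g) (P * g) g := hLam
        _ ≤ Lam m (T - f 0) (P * f 0) (f 0) := hM.1
        _ ≤ (T - f 0) - ∑ i ∈ Finset.range m, f (i+1) := hIH.1
        _ = T - ∑ i ∈ Finset.range (m+1), f i := by rw [hsum]; ring
    · intro heq
      have heq' : (T - f 0) - ∑ i ∈ Finset.range m, f (i+1) = Lam (m+1) T P a := by
        rw [← heq, hsum]; ring
      have hfg : f 0 = g := by
        by_contra hne
        have hlt : f 0 < g := lt_of_le_of_ne hf0g hne
        have h1 := hM.2 hlt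
        have h2 := hIH.1
        rw [hLam] at heq'
        linarith
      have heq2 : (T - f 0) - ∑ i ∈ Finset.range m, f (i+1) = Lam m (T - f 0) (P * f 0) (f 0) := by
        rw [heq', hLam, hfg]
      have htail := hIH.2 heq2
      intro i hi
      match i with
      | 0 => rw [grd_zero, ← hgdef, ← hfg]
      | (i+1) =>
        rw [grd_succ, ← hgdef, ← hfg]
        exact htail i (by omega)

/-- Let `x 1, …, x k` be positive reals with `x 1 + ⋯ + x k < 1`,
`x 1 ≥ ⋯ ≥ x k`, and `x 1 ⋯ x j ≤ 1 - (x 1 + ⋯ + x j)` for every `j ≤ k`. Then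
`x 1 + ⋯ + x k ≤ 1/s 1 + ⋯ + 1/s k`, with equality iff `x i = 1/s i` for all
`i`, where `s` is the Sylvester sequence. -/
theorem sum_le_sylvester_sum (k : ℕ) (x : ℕ → ℝ) (s : ℕ → ℕ) (hs1 : s 1 = 2)
    (hs : ∀ i, 2 ≤ i → s i = (∏ j ∈ Finset.Icc 1 (i - 1), s j) + 1)
    (hpos : ∀ i, 1 ≤ i → i ≤ k → 0 < x i)
    (hsum : ∑ i ∈ Finset.Icc 1 k, x i < 1)
    (hmono : ∀ i, 1 ≤ i → i < k → x (i + 1) ≤ x i)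
    (hps : ∀ j, 1 ≤ j → j ≤ k →
      (∏ i ∈ Finset.Icc 1 j, x i) ≤ 1 - ∑ i ∈ Finset.Icc 1 j, x i) :
    (∑ i ∈ Finset.Icc 1 k, x i ≤ ∑ i ∈ Finset.Icc 1 k, 1 / (s i : ℝ)) ∧
    ((∑ i ∈ Finset.Icc 1 k, x i = ∑ i ∈ Finset.Icc 1 k, 1 / (s i : ℝ)) ↔
      ∀ i, 1 ≤ i → i ≤ k → x i = 1 / (s i : ℝ)) := by
  -- Sylvester facts
  set N : ℕ → ℕ := fun j => ∏ i ∈ Finset.Icc 1 j, s i with hNdef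
  have hs2 : ∀ i, 1 ≤ i → 2 ≤ s i := by
    intro i
    induction i using Nat.strong_induction_on with
    | _ i ihi =>
      intro hi
      rcases eq_or_lt_of_le hi with h | h
      · rw [← h, hs1]
      · have h2 : 2 ≤ i := h
        rw [hs i h2]
        have : 1 ≤ ∏ j ∈ Finset.Icc 1 (i-1), s j := by
          apply Finset.one_le_prod'
          intro j hj
          simp only [Finset.mem_Icc] at hj
          exact le_trans (by omega) (ihi j (by omega) hj.1)
        omega
  have hNpos : ∀ j, 1 ≤ N j := by
    intro j
    apply Finset.one_le_prod'
    intro i hi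
    simp only [Finset.mem_Icc] at hi
    exact le_trans (by omega) (hs2 i hi.1)
  have hN0 : N 0 = 1 := by simp [hNdef]
  have hN1 : N 1 = 2 := by simp [hNdef, hs1]
  have hNsucc : ∀ j, N (j+1) = N j * s (j+1) := by
    intro j
    exact Finset.prod_Icc_succ_top (by omega) s
  have hssucc : ∀ j, s (j+1) = N j + 1 := by
    intro j
    rcases Nat.eq_zero_or_pos j with h | h
    · subst h; rw [hs1, hN0]
    · have := hs (j+1) (by omega)
      simpa [hNdef] using this
  have hsleN : ∀ j, 1 ≤ j → s j ≤ N j := by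
    intro j hj
    apply Finset.single_le_prod'
    · intro i hi
      simp only [Finset.mem_Icc] at hi
      exact le_trans (by omega) (hs2 i hi.1)
    · simp [Finset.mem_Icc]; omega
  -- real cast positivity
  have hNR : ∀ j, (0:ℝ) < (N j : ℝ) := by
    intro j; exact_mod_cast Nat.lt_of_lt_of_le Nat.zero_lt_one (hNpos j)
  have hsR : ∀ j, 1 ≤ j → (0:ℝ) < (s j : ℝ) := by
    intro j hj; exact_mod_cast Nat.lt_of_lt_of_le Nat.zero_lt_two (hs2 j hj) |>.trans_le' (by norm_num)
  -- one-step computation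
  have hstep : ∀ j, 1 ≤ j →
      (min (1/(s j):ℝ) ((1/(N j))/(1+1/(N j))) = 1/(s (j+1)) ∧
       (1/(N j):ℝ) - 1/(s (j+1)) = 1/(N (j+1)) ∧
       (1/(N j):ℝ) * (1/(s (j+1))) = 1/(N (j+1))) := by
    intro j hj
    have hNj := hNR j
    have hsj := hsR j hj
    have hsj1 := hsR (j+1) (by omega)
    have hcast1 : (s (j+1) : ℝ) = (N j : ℝ) + 1 := by
      rw [hssucc j]; push_cast; ring
    have hcast2 : (N (j+1) : ℝ) = (N j : ℝ) * (s (j+1) : ℝ) := by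
      rw [hNsucc j]; push_cast; ring
    have hcap : ((1:ℝ)/(N j))/(1+1/(N j)) = 1/(s (j+1)) := by
      rw [hcast1]; field_simp
    refine ⟨?_, ?_, ?_⟩
    · rw [hcap]
      apply min_eq_right
      apply one_div_le_one_div_of_le hsj
      have hmm : s j ≤ s (j+1) := by rw [hssucc j]; exact le_trans (hsleN j hj) (Nat.le_succ _)
      exact_mod_cast hmm
    · rw [hcast2, hcast1]; field_simp; ring
    · rw [hcast2]; field_simp
  -- iteration of Lam
  have hLamiter : ∀ q j, 1 ≤ j →
      Lam q (1/(N j):ℝ) (1/(N j)) (1/(s j)) = 1/(N (j+q)) := by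
    intro q
    induction q with
    | zero => intro j hj; rfl
    | succ q ihq =>
      intro j hj
      obtain ⟨e1, e2, e3⟩ := hstep j hj
      rw [Lam_succ, e1, e2, e3, ihq (j+1) (by omega)]
      have hjq : j+1+q = j+(q+1) := by omega
      rw [hjq]
  have hgrditer : ∀ i j, 1 ≤ j →
      grd i (1/(N j):ℝ) (1/(N j)) (1/(s j)) = 1/(s (j+i+1)) := by
    intro i
    induction i with
    | zero =>
      intro j hj
      obtain ⟨e1, _, _⟩ := hstep j hj
      rw [grd_zero, e1]
    | succ i ihi =>
      intro j hj
      obtain ⟨e1, e2, e3⟩ := hstep j hj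
      rw [grd_succ, e1, e2, e3, ihi (j+1) (by omega)]
      have hji : j+1+i+1 = j+(i+1)+1 := by omega
      rw [hji]
  -- initial step from (1,1,1/2)
  have hhalf : ((1:ℝ)/(N 1)) = 1/2 := by rw [hN1]; norm_num
  have hhalfs : ((1:ℝ)/(s 1)) = 1/2 := by rw [hs1]; norm_num
  have hinit : ∀ m : ℕ, Lam (m+1) 1 1 (1/2) = Lam m (1/2 : ℝ) (1/2) (1/2) := by
    intro m
    rw [Lam_succ]
    norm_num
  have hLamval : ∀ m : ℕ, 1 ≤ m → Lam m 1 1 (1/2) = 1/(N m : ℝ) := by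
    intro m hm
    obtain ⟨m', rfl⟩ : ∃ m', m = m'+1 := ⟨m-1, by omega⟩
    rw [hinit m']
    have h7 := hLamiter m' 1 (le_refl 1)
    rw [hhalf, hhalfs] at h7
    rw [h7]
    have h8 : 1+m' = m'+1 := by omega
    rw [h8]
  have hgrdval : ∀ i : ℕ, grd i 1 1 (1/2) = 1/(s (i+1) : ℝ) := by
    intro i
    match i with
    | 0 =>
      rw [grd_zero]
      norm_num [hs1]
    | (i+1) =>
      rw [grd_succ]
      norm_num
      have h7 := hgrditer i 1 (le_refl 1)
      rw [hhalf, hhalfs] at h7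
      norm_num at h7
      rw [h7]
      have h8 : 1+i+1 = i+1+1 := by omega
      rw [h8]
  -- sum of sylvester reciprocals
  have hsumS : ∀ j : ℕ, ∑ i ∈ Finset.Icc 1 j, (1/(s i):ℝ) = 1 - 1/(N j : ℝ) := by
    intro j
    induction j with
    | zero => simp [hN0]
    | succ j ihj =>
      rw [Finset.sum_Icc_succ_top (by omega : 1 ≤ j+1), ihj]
      have hNj := hNR j
      have hNj1 := hNR (j+1)
      have hsj1 := hsR (j+1) (by omega)
      have hcast1 : (s (j+1) : ℝ) = (N j : ℝ) + 1 := by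
        rw [hssucc j]; push_cast; ring
      have hcast2 : (N (j+1) : ℝ) = (N j : ℝ) * (s (j+1) : ℝ) := by
        rw [hNsucc j]; push_cast; ring
      rw [hcast2, hcast1]
      field_simp
      ring
  -- conversions between Icc and range
  have hconv_sum : ∀ (w : ℕ → ℝ) (j : ℕ),
      ∑ i ∈ Finset.Icc 1 j, w i = ∑ i ∈ Finset.range j, w (i+1) := by
    intro w j
    rw [← Finset.Ico_add_one_right_eq_Icc, Finset.sum_Ico_eq_sum_range]
    simp [add_comm]
  have hconv_prod : ∀ (w : ℕ → ℝ) (j : ℕ),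
      ∏ i ∈ Finset.Icc 1 j, w i = ∏ i ∈ Finset.range j, w (i+1) := by
    intro w j
    rw [← Finset.Ico_add_one_right_eq_Icc, Finset.prod_Ico_eq_prod_range]
    simp [add_comm]
  -- main case split
  rcases Nat.eq_zero_or_pos k with hk0 | hk
  · subst hk0
    rw [Finset.Icc_eq_empty (by omega)]
    simp only [Finset.sum_empty]
    refine ⟨le_refl _, ?_⟩
    constructor
    · intro _ i h1 h2; omega
    · intro _; trivial
  · -- apply main lemma
    have hmain := main_lemma k 1 1 (1/2) (fun i => x (i+1)) one_pos
      (fun i hi => hpos (i+1) (by omega) (by omega))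
      (fun i hi => hmono (i+1) (by omega) (by omega))
      (fun _ => by
        have := hps 1 (le_refl 1) hk
        simp only [Finset.Icc_self, Finset.prod_singleton, Finset.sum_singleton] at this
        linarith)
      (fun j hj hjk => by
        have := hps j (by omega) hjk
        rw [hconv_prod x j, hconv_sum x j] at this
        rw [one_mul]
        linarith)
    rw [hLamval k hk] at hmain
    have hxsum : ∑ i ∈ Finset.Icc 1 k, x i = ∑ i ∈ Finset.range k, x (i+1) := hconv_sum x k
    constructor
    · rw [hxsum, hsumS k]
      linarith [hmain.1]
    · constructor
      · intro heq
        have heq2 : (1:ℝ) - ∑ i ∈ Finset.range k, x (i+1) = 1/(N k : ℝ) := by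
          rw [← hxsum, heq, hsumS k]; ring
        have := hmain.2 heq2
        intro i h1 h2
        obtain ⟨i', rfl⟩ : ∃ i', i = i'+1 := ⟨i-1, by omega⟩
        have h5 := this i' (by omega)
        rw [hgrdval i'] at h5
        exact h5
      · intro hall
        apply Finset.sum_congr rfl
        intro i hi
        simp only [Finset.mem_Icc] at hi
        exact hall i hi.1 hi.2
end

section
/- Let d ≥ 2 and let a_1, ..., a_d > 1 be real numbers with 1/a_1 + ... + 1/a_d = 1. Let S = conv({0, a_1 e_1, ..., a_d e_d}) ⊂ ℝ^d. Then for every v ∈ ℝ^d, the translate S + v contains no point of ℤ^d in its interior if and only if v ∈ ℤ^d. -/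
/-- Let `d ≥ 2` and `a 1, …, a d > 1` be reals with `∑ 1/a i = 1`, and let
`S = conv({0, a 1 • e 1, …, a d • e d}) ⊂ ℝ^d`. Then for every `v ∈ ℝ^d`, the
translate `S + v` is lattice-free (its interior contains no integer point) if and
only if `v ∈ ℤ^d`. -/
theorem translate_lattice_free_iff_integral (d : ℕ) (hd : 2 ≤ d)
    (a : Fin d → ℝ) (ha : ∀ i, 1 < a i) (hsum : ∑ i, 1 / a i = 1)
    (S : Set (Fin d → ℝ))
    (hS : S = convexHull ℝ (insert (0 : Fin d → ℝ)
      (Set.range (fun i : Fin d => fun j => if j = i then a i else 0)))) :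
    ∀ v : Fin d → ℝ,
      (∀ q : Fin d → ℤ,
        (fun j => (q j : ℝ)) ∉ interior ((fun x => x + v) '' S)) ↔
      (∀ j, ∃ z : ℤ, v j = (z : ℝ)) := by
  have ha0 : ∀ i, (0:ℝ) < a i := fun i => lt_trans one_pos (ha i)
  set H : Set (Fin d → ℝ) := {x | (∀ i, 0 ≤ x i) ∧ ∑ i, x i / a i ≤ 1} with hH
  set T : Set (Fin d → ℝ) := {x | (∀ i, 0 < x i) ∧ ∑ i, x i / a i < 1} with hT
  -- S ⊆ H
  have hSH : S ⊆ H := by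
    rw [hS]
    apply convexHull_min
    · rintro p (rfl | ⟨i, rfl⟩)
      · constructor
        · intro i; simp
        · simp
      · constructor
        · intro j
          dsimp only
          split
          · exact le_of_lt (ha0 i)
          · exact le_refl 0
        · have h' : ∀ j, (if j = i then a i else 0) / a j
              = if j = i then a i / a j else 0 := by
            intro j; split <;> simp
          rw [Finset.sum_congr rfl (fun j _ => h' j)]
          rw [Finset.sum_ite_eq' Finset.univ i (fun j => a i / a j)]
          simp [div_self (ne_of_gt (ha0 i))]
    · -- H convex
      intro x hx y hy s t hs ht hst
      constructor
      · intro i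
        have := hx.1 i
        have := hy.1 i
        simp only [Pi.add_apply, Pi.smul_apply, smul_eq_mul]
        positivity
      · have h' : ∑ i, (s • x + t • y) i / a i
            = s * ∑ i, x i / a i + t * ∑ i, y i / a i := by
          rw [Finset.mul_sum, Finset.mul_sum, ← Finset.sum_add_distrib]
          apply Finset.sum_congr rfl
          intro i _
          simp only [Pi.add_apply, Pi.smul_apply, smul_eq_mul]
          ring
        rw [h']
        calc s * ∑ i, x i / a i + t * ∑ i, y i / a i
            ≤ s * 1 + t * 1 := by
              gcongr
              exacts [hx.2, hy.2]
          _ = 1 := by rw [mul_one, mul_one, hst]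
  -- T ⊆ S
  have hTS : T ⊆ S := by
    intro x hx
    rw [hS]
    set pt : Option (Fin d) → (Fin d → ℝ) :=
      fun o => o.elim 0 (fun i j => if j = i then a i else 0) with hpt
    set w : Option (Fin d) → ℝ :=
      fun o => o.elim (1 - ∑ i, x i / a i) (fun i => x i / a i) with hw
    have hmem := (convex_convexHull ℝ (insert (0 : Fin d → ℝ)
      (Set.range (fun i : Fin d => fun j => if j = i then a i else 0)))).sum_mem
      (t := (Finset.univ : Finset (Option (Fin d)))) (w := w) (z := pt)
      (by
        intro o _
        match o with
        | none =>
          show (0:ℝ) ≤ 1 - ∑ i, x i / a i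
          have := hx.2; linarith
        | some i =>
          show (0:ℝ) ≤ x i / a i
          exact div_nonneg (le_of_lt (hx.1 i)) (le_of_lt (ha0 i)))
      (by
        rw [Fintype.sum_option]
        show (1 - ∑ i, x i / a i) + ∑ i, x i / a i = 1
        ring)
      (by
        intro o _
        match o with
        | none => exact subset_convexHull ℝ _ (Set.mem_insert _ _)
        | some i => exact subset_convexHull ℝ _ (Set.mem_insert_of_mem _ ⟨i, rfl⟩))
    have heq : ∑ o : Option (Fin d), w o • pt o = x := by
      rw [Fintype.sum_option]
      funext j
      show ((1 - ∑ i, x i / a i) • (0 : Fin d → ℝ)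
          + ∑ i, (x i / a i) • (fun j' => if j' = i then a i else 0) : Fin d → ℝ) j = x j
      simp only [smul_zero, Pi.add_apply, Pi.zero_apply, zero_add,
        Finset.sum_apply, Pi.smul_apply, smul_eq_mul, mul_ite, mul_zero]
      rw [Finset.sum_ite_eq Finset.univ j (fun i => x i / a i * a i)]
      simp [div_mul_cancel₀ _ (ne_of_gt (ha0 j))]
    rwa [heq] at hmem
  -- T open
  have hTopen : IsOpen T := by
    have h' : T = (⋂ i, (fun x : Fin d → ℝ => x i) ⁻¹' Set.Ioi 0) ∩
        ((fun x : Fin d → ℝ => ∑ i, x i / a i) ⁻¹' Set.Iio 1) := by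
      ext x
      simp [hT, Set.mem_iInter]
    rw [h']
    exact (isOpen_iInter_of_finite fun i =>
        isOpen_Ioi.preimage (continuous_apply i)).inter
      (isOpen_Iio.preimage (continuous_finset_sum _ fun i _ =>
        (continuous_apply i).div_const _))
  -- perturbation lemma
  have hperturb : ∀ x ∈ interior S, ∀ y : Fin d → ℝ, ∃ t : ℝ, 0 < t ∧ x + t • y ∈ S := by
    intro x hx y
    have hcont : Continuous (fun t : ℝ => x + t • y) :=
      continuous_const.add (continuous_id.smul continuous_const)
    have hopen : IsOpen ((fun t : ℝ => x + t • y) ⁻¹' interior S) :=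
      isOpen_interior.preimage hcont
    have h0 : (0:ℝ) ∈ (fun t : ℝ => x + t • y) ⁻¹' interior S := by
      simpa using hx
    obtain ⟨δ, hδ, hball⟩ := Metric.isOpen_iff.1 hopen 0 h0
    refine ⟨δ/2, by linarith, ?_⟩
    have hb : (δ/2 : ℝ) ∈ Metric.ball (0:ℝ) δ := by
      rw [Metric.mem_ball, Real.dist_eq, sub_zero,
        abs_of_pos (by linarith : (0:ℝ) < δ/2)]
      linarith
    exact interior_subset (hball hb)
  -- interior S ⊆ T
  have hintT : interior S ⊆ T := by
    intro x hx
    constructor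
    · intro i
      obtain ⟨t, ht, hmem⟩ := hperturb x hx (-(fun j => if j = i then (1:ℝ) else 0))
      have h1 := (hSH hmem).1 i
      have h2 : (x + t • -(fun j => if j = i then (1:ℝ) else 0)) i = x i - t := by
        simp [sub_eq_add_neg]
      rw [h2] at h1
      linarith
    · have i0 : Fin d := ⟨0, by omega⟩
      obtain ⟨t, ht, hmem⟩ := hperturb x hx (fun j => if j = i0 then (1:ℝ) else 0)
      have h1 := (hSH hmem).2
      have hsum2 : ∑ j, (x + t • fun j => if j = i0 then (1:ℝ) else 0) j / a j
          = (∑ j, x j / a j) + t / a i0 := by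
        have h' : ∀ j, (x + t • fun j => if j = i0 then (1:ℝ) else 0) j / a j
            = x j / a j + (if j = i0 then t / a j else 0) := by
          intro j
          simp only [Pi.add_apply, Pi.smul_apply, smul_eq_mul, mul_ite, mul_one, mul_zero]
          split <;> ring
        rw [Finset.sum_congr rfl (fun j _ => h' j), Finset.sum_add_distrib,
          Finset.sum_ite_eq' Finset.univ i0 (fun j => t / a j)]
        simp
      rw [hsum2] at h1
      have hpos : 0 < t / a i0 := div_pos ht (ha0 i0)
      linarith
  intro v
  -- translation
  have htrans : ∀ x : Fin d → ℝ,
      (x + v ∈ interior ((fun x => x + v) '' S)) ↔ x ∈ interior S := by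
    intro x
    have h := Homeomorph.image_interior (Homeomorph.addRight v) S
    rw [show ((Homeomorph.addRight v) '' S) = (fun x => x + v) '' S from rfl] at h
    rw [← h]
    constructor
    · rintro ⟨y, hy, hyx⟩
      have hyx' : y = x := add_right_cancel hyx
      rwa [hyx'] at hy
    · intro hx
      exact ⟨x, hx, rfl⟩
  constructor
  · -- lattice-free → v integral
    intro h j
    by_contra hnz
    push_neg at hnz
    set q : Fin d → ℤ := fun i => ⌊v i⌋ + 1 with hq
    set x : Fin d → ℝ := fun i => (q i : ℝ) - v i with hx
    have hx1 : ∀ i, 0 < x i := by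
      intro i
      have := Int.lt_floor_add_one (v i)
      simp only [hx, hq]
      push_cast
      linarith
    have hx2 : ∀ i, x i ≤ 1 := by
      intro i
      have := Int.floor_le (v i)
      simp only [hx, hq]
      push_cast
      linarith
    have hxj : x j < 1 := by
      have hfl : (⌊v j⌋ : ℝ) < v j := by
        rcases lt_or_eq_of_le (Int.floor_le (v j)) with h' | h'
        · exact h'
        · exact absurd h'.symm (hnz ⌊v j⌋)
      simp only [hx, hq]
      push_cast
      linarith
    have hxT : x ∈ T := by
      refine ⟨hx1, ?_⟩
      calc ∑ i, x i / a i < ∑ i, 1 / a i := by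
            apply Finset.sum_lt_sum
            · intro i _
              exact div_le_div_of_nonneg_right (hx2 i) (ha0 i).le
            · exact ⟨j, Finset.mem_univ j,
                div_lt_div_of_pos_right hxj (ha0 j)⟩
        _ = 1 := hsum
    have hxint : x ∈ interior S := interior_maximal hTS hTopen hxT
    have hqx : (fun i => (q i : ℝ)) = x + v := by funext i; simp [hx]
    exact h q (by rw [hqx]; exact (htrans x).2 hxint)
  · -- v integral → lattice-free
    intro hv q hmem
    choose z hz using hv
    have hx : (fun j => (q j : ℝ)) = (fun j => ((q j - z j : ℤ) : ℝ)) + v := by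
      funext j
      simp only [Pi.add_apply]
      push_cast
      rw [hz j]
      ring
    rw [hx] at hmem
    have hint := (htrans _).1 hmem
    have hT' := hintT hint
    have hge : ∀ i, (1:ℝ) ≤ ((q i - z i : ℤ) : ℝ) := by
      intro i
      have h1 : (0:ℝ) < ((q i - z i : ℤ) : ℝ) := hT'.1 i
      have h2 : (0:ℤ) < q i - z i := by exact_mod_cast h1
      exact_mod_cast h2
    have hge' : (1:ℝ) ≤ ∑ i, ((q i - z i : ℤ) : ℝ) / a i := by
      rw [← hsum]
      apply Finset.sum_le_sum
      intro i _
      exact div_le_div_of_nonneg_right (hge i) (ha0 i).le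
    have := hT'.2
    linarith
end

section
/- Let S ⊂ ℝ^d be a d-dimensional simplex with the origin in its interior. If β_1, ..., β_{d+1} are the barycentric coordinates of the origin with respect to the vertices of S, then β_1, ..., β_{d+1} are also the barycentric coordinates of the origin with respect to the vertices of the polar dual simplex S* (under the natural bijection between vertices of S* and facets of S, pairing each vertex v_i of S with the facet of S not containing v_i). -/
/-- Let `S ⊂ ℝ^d` be a `d`-dimensional simplex with vertices `v i` and the origin
in its interior, with barycentric coordinates `β` of the origin, i.e.
`∑ β i • v i = 0`, `β i > 0`, `∑ β i = 1`. If `w i` are the vertices of the polar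
dual simplex `S*` under the natural pairing (so that `⟪v j, w i⟫ = 1` for all
`j ≠ i`), then `β` are also the barycentric coordinates of the origin with
respect to `S*`, i.e. `∑ β i • w i = 0`. -/
theorem dual_same_barycentric (d : ℕ) (hd : 1 ≤ d)
    (v w : Fin (d + 1) → EuclideanSpace ℝ (Fin d))
    (hind : AffineIndependent ℝ v)
    (β : Fin (d + 1) → ℝ) (hβpos : ∀ i, 0 < β i) (hβsum : ∑ i, β i = 1)
    (hβbary : ∑ i, β i • v i = 0)
    (hw : ∀ i j : Fin (d + 1), j ≠ i → (inner ℝ (v j) (w i) : ℝ) = 1) :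
    ∑ i, β i • w i = 0 := by
  classical
  set z := ∑ i, β i • w i with hz
  have hvz : ∀ j, (inner ℝ (v j) z : ℝ) = 0 := by
    intro j
    have h0 : (inner ℝ (∑ i, β i • v i) (w j) : ℝ) = 0 := by
      rw [hβbary, inner_zero_left]
    have h1 : (inner ℝ (∑ i, β i • v i) (w j) : ℝ)
        = β j * inner ℝ (v j) (w j) + ∑ i ∈ Finset.univ.erase j, β i := by
      rw [sum_inner, ← Finset.add_sum_erase _ _ (Finset.mem_univ j)]
      congr 1
      · rw [real_inner_smul_left]
      · refine Finset.sum_congr rfl fun i hi => ?_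
        rw [real_inner_smul_left, hw j i (Finset.ne_of_mem_erase hi), mul_one]
    have h2 : (inner ℝ (v j) z : ℝ)
        = β j * inner ℝ (v j) (w j) + ∑ i ∈ Finset.univ.erase j, β i := by
      rw [hz, inner_sum, ← Finset.add_sum_erase _ _ (Finset.mem_univ j)]
      congr 1
      · rw [real_inner_smul_right]
      · refine Finset.sum_congr rfl fun i hi => ?_
        rw [real_inner_smul_right, hw i j (Finset.ne_of_mem_erase hi).symm, mul_one]
    rw [h2, ← h1, h0]
  have htop : affineSpan ℝ (Set.range v) = ⊤ := by
    rw [hind.affineSpan_eq_top_iff_card_eq_finrank_add_one]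
    simp
  have hzmem : z ∈ affineSpan ℝ (Set.range v) := htop ▸ AffineSubspace.mem_top ℝ _ z
  obtain ⟨c, hc1, hcz⟩ := eq_affineCombination_of_mem_affineSpan_of_fintype hzmem
  rw [Finset.affineCombination_eq_linear_combination _ _ _ hc1] at hcz
  have hzz : (inner ℝ z z : ℝ) = 0 := by
    nth_rewrite 1 [hcz]
    rw [sum_inner]
    refine Finset.sum_eq_zero fun i _ => ?_
    rw [real_inner_smul_left, hvz, mul_zero]
  exact inner_self_eq_zero.mp hzz
end

section
/- For d ≥ 2 and k ≥ 0, the simplex S^d_k = conv({0, s_1 e_1, ..., s_{d-1} e_{d-1}, (k+1)(s_d - 1) e_d}) ⊂ ℝ^d contains exactly k integer points in its interior, and its volume is (k+1)(s_d - 1)^2 / d!. -/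
open MeasureTheory

lemma corner_convexHull (d : ℕ) (a : Fin d → ℝ) (ha : ∀ i, 0 < a i) :
    convexHull ℝ (insert (0 : Fin d → ℝ) (Set.range fun i => Pi.single i (a i))) =
      {x | (∀ i, 0 ≤ x i) ∧ ∑ i, x i / a i ≤ 1} := by
  apply le_antisymm
  · apply convexHull_min
    · rintro x (rfl | ⟨i, rfl⟩)
      · refine ⟨fun i => le_rfl, by simp⟩
      · refine ⟨fun j => ?_, ?_⟩
        · beta_reduce
          rcases eq_or_ne j i with rfl | h
          · rw [Pi.single_eq_same]; exact (ha j).le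
          · simp [Pi.single_eq_of_ne h]
        · beta_reduce
          have hth : ∀ j, Pi.single (M := fun _ => ℝ) i (a i) j / a j = if j = i then 1 else 0 := by
            intro j
            rcases eq_or_ne j i with rfl | h
            · rw [Pi.single_eq_same, div_self (ha j).ne', if_pos rfl]
            · rw [Pi.single_eq_of_ne h, zero_div, if_neg h]
          simp [hth]
    · have h1 : Convex ℝ {x : Fin d → ℝ | ∀ i, 0 ≤ x i} := by
        have : {x : Fin d → ℝ | ∀ i, 0 ≤ x i} = ⋂ i, {x | 0 ≤ x i} := by
          ext x; simp
        rw [this]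
        exact convex_iInter fun i => convex_halfSpace_ge (LinearMap.proj i : (Fin d → ℝ) →ₗ[ℝ] ℝ).isLinear 0
      have h2 : Convex ℝ {x : Fin d → ℝ | ∑ i, x i / a i ≤ 1} := by
        refine convex_halfSpace_le ⟨fun x y => ?_, fun c x => ?_⟩ 1
        · simp [Finset.sum_add_distrib, add_div]
        · simp [Finset.mul_sum, mul_div_assoc]
      exact h1.inter h2
  · rintro x ⟨hx0, hx1⟩
    have hconv : Convex ℝ (convexHull ℝ (insert (0 : Fin d → ℝ) (Set.range fun i => Pi.single i (a i)))) := convex_convexHull _ _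
    have := hconv.sum_mem (t := (Finset.univ : Finset (Option (Fin d))))
      (w := fun o => Option.elim o (1 - ∑ i, x i / a i) (fun i => x i / a i))
      (z := fun o => Option.elim o 0 (fun i => Pi.single i (a i)))
      (fun o _ => ?_) ?_ (fun o _ => ?_)
    · convert this using 1
      rw [Fintype.sum_option]
      simp only [Option.elim]
      funext j
      simp only [smul_zero, zero_add, Finset.sum_apply, Pi.smul_apply, smul_eq_mul,
        Pi.single_apply]
      have hrw : ∀ i, x i / a i * (if j = i then a i else 0) =
          if j = i then x i / a i * a i else 0 := fun i => by split <;> simp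
      simp only [hrw, Finset.sum_ite_eq, Finset.mem_univ, if_true]
      rw [div_mul_cancel₀ _ (ha j).ne']
    · rcases o with _ | i
      · simpa using hx1
      · exact div_nonneg (hx0 i) (ha i).le
    · rw [Fintype.sum_option]; simp
    · rcases o with _ | i
      · exact subset_convexHull _ _ (Set.mem_insert _ _)
      · exact subset_convexHull _ _ (Set.mem_insert_iff.2 (Or.inr ⟨i, rfl⟩))

lemma corner_interior (d : ℕ) (hd : 0 < d) (a : Fin d → ℝ) (ha : ∀ i, 0 < a i) :
    interior {x : Fin d → ℝ | (∀ i, 0 ≤ x i) ∧ ∑ i, x i / a i ≤ 1} =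
      {x | (∀ i, 0 < x i) ∧ ∑ i, x i / a i < 1} := by
  have hsum : ∀ (x : Fin d → ℝ) (i : Fin d) (c : ℝ),
      ∑ j, (x + (Pi.single i c : Fin d → ℝ)) j / a j = (∑ j, x j / a j) + c / a i := by
    intro x i c
    have : ∀ j, (x + (Pi.single i c : Fin d → ℝ)) j / a j
        = x j / a j + (if i = j then c / a j else 0) := by
      intro j
      rcases eq_or_ne j i with rfl | h
      · simp [add_div]
      · simp [Pi.single_eq_of_ne h, h.symm]
    rw [Finset.sum_congr rfl fun j _ => this j, Finset.sum_add_distrib,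
      Finset.sum_ite_eq]
    simp
  apply le_antisymm
  · intro x hx
    rcases Metric.mem_nhds_iff.1 (mem_interior_iff_mem_nhds.1 hx) with ⟨ε, hε, hball⟩
    have hmem : ∀ i (c : ℝ), |c| < ε → x + (Pi.single i c : Fin d → ℝ) ∈
        {x : Fin d → ℝ | (∀ i, 0 ≤ x i) ∧ ∑ i, x i / a i ≤ 1} := by
      intro i c hc
      apply hball
      rw [Metric.mem_ball]
      refine lt_of_le_of_lt ((dist_pi_le_iff (abs_nonneg c)).2 fun j => ?_) hc
      rcases eq_or_ne j i with rfl | h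
      · simp [Real.dist_eq]
      · simp [Pi.single_eq_of_ne h, abs_nonneg]
    constructor
    · intro i
      have := (hmem i (-(ε/2)) (by rw [abs_neg, abs_of_pos (by linarith)]; linarith)).1 i
      simp only [Pi.add_apply, Pi.single_eq_same] at this
      linarith
    · set i0 : Fin d := ⟨0, hd⟩
      have h1 := (hmem i0 (ε/2) (by rw [abs_of_pos (by linarith)]; linarith)).2
      rw [hsum] at h1
      have : 0 < (ε/2) / a i0 := div_pos (by linarith) (ha i0)
      linarith
  · have hopen : IsOpen {x : Fin d → ℝ | (∀ i, 0 < x i) ∧ ∑ i, x i / a i < 1} := by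
      have h1 : IsOpen {x : Fin d → ℝ | ∀ i, 0 < x i} := by
        have : {x : Fin d → ℝ | ∀ i, 0 < x i} = ⋂ i, {x | 0 < x i} := by ext x; simp
        rw [this]
        exact isOpen_iInter_of_finite fun i => isOpen_lt continuous_const (continuous_apply i)
      have h2 : IsOpen {x : Fin d → ℝ | ∑ i, x i / a i < 1} :=
        isOpen_lt (by fun_prop) continuous_const
      exact h1.inter h2
    rw [← hopen.interior_eq]
    apply interior_mono
    rintro x ⟨h1, h2⟩
    exact ⟨fun i => (h1 i).le, h2.le⟩

lemma vol_corner : ∀ (n : ℕ) (c : ℝ), 0 ≤ c →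
    volume {x : Fin n → ℝ | (∀ i, 0 ≤ x i) ∧ ∑ i, x i ≤ c} =
      ENNReal.ofReal (c ^ n / n.factorial) := by
  intro n
  induction n with
  | zero =>
    intro c hc
    have : {x : Fin 0 → ℝ | (∀ i, 0 ≤ x i) ∧ ∑ i, x i ≤ c} = Set.univ := by
      ext x
      simpa using hc
    rw [this, MeasureTheory.volume_pi, MeasureTheory.Measure.pi_univ]
    simp
  | succ n ih =>
    intro c hc
    set B : Set (ℝ × (Fin n → ℝ)) :=
      {p | 0 ≤ p.1 ∧ (∀ i, 0 ≤ p.2 i) ∧ p.1 + ∑ i, p.2 i ≤ c} with hB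
    have hBclosed : IsClosed B := by
      have h1 : IsClosed {p : ℝ × (Fin n → ℝ) | 0 ≤ p.1} :=
        isClosed_le continuous_const continuous_fst
      have h2 : IsClosed {p : ℝ × (Fin n → ℝ) | ∀ i, 0 ≤ p.2 i} := by
        have : {p : ℝ × (Fin n → ℝ) | ∀ i, 0 ≤ p.2 i} = ⋂ i, {p | 0 ≤ p.2 i} := by
          ext p; simp
        rw [this]
        exact isClosed_iInter fun i =>
          isClosed_le continuous_const ((continuous_apply i).comp continuous_snd)
      have h3 : IsClosed {p : ℝ × (Fin n → ℝ) | p.1 + ∑ i, p.2 i ≤ c} :=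
        isClosed_le (by fun_prop) continuous_const
      exact h1.inter (h2.inter h3)
    have hpre : {x : Fin (n+1) → ℝ | (∀ i, 0 ≤ x i) ∧ ∑ i, x i ≤ c} =
        (MeasurableEquiv.piFinSuccAbove (fun _ => ℝ) 0) ⁻¹' B := by
      ext x
      simp only [Set.mem_preimage, hB, Set.mem_setOf_eq,
        MeasurableEquiv.piFinSuccAbove_apply, Fin.zero_succAbove, Fin.insertNthEquiv,
        Equiv.coe_fn_symm_mk]
      constructor
      · rintro ⟨h0, hsum⟩
        exact ⟨h0 0, fun i => h0 i.succ, by rwa [Fin.sum_univ_succ] at hsum⟩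
      · rintro ⟨h0, hrest, hsum⟩
        refine ⟨fun i => Fin.cases h0 hrest i, by rwa [Fin.sum_univ_succ]⟩
    have hmp := volume_preserving_piFinSuccAbove (fun _ : Fin (n+1) => ℝ) 0
    rw [hpre, hmp.measure_preimage (hBclosed.measurableSet.nullMeasurableSet)]
    rw [Measure.volume_eq_prod, Measure.prod_apply hBclosed.measurableSet]
    have hslice : ∀ t : ℝ, volume (Prod.mk t ⁻¹' B) =
        Set.indicator (Set.Icc 0 c) (fun t => ENNReal.ofReal ((c - t) ^ n / n.factorial)) t := by
      intro t
      by_cases ht : t ∈ Set.Icc (0:ℝ) c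
      · rw [Set.indicator_of_mem ht]
        have : Prod.mk t ⁻¹' B = {y : Fin n → ℝ | (∀ i, 0 ≤ y i) ∧ ∑ i, y i ≤ c - t} := by
          ext y
          simp only [hB, Set.mem_preimage, Set.mem_setOf_eq]
          constructor
          · rintro ⟨-, h2, h3⟩; exact ⟨h2, by linarith⟩
          · rintro ⟨h2, h3⟩; exact ⟨ht.1, h2, by linarith⟩
        rw [this, ih (c - t) (by linarith [ht.2])]
      · rw [Set.indicator_of_notMem ht]
        have : Prod.mk t ⁻¹' B = ∅ := by
          ext y
          simp only [hB, Set.mem_preimage, Set.mem_setOf_eq, Set.mem_empty_iff_false,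
            iff_false, not_and]
          intro h1 h2
          have hct : c < t := by
            rw [Set.mem_Icc, not_and_or] at ht
            rcases ht with h | h
            · exact absurd h1 h
            · exact lt_of_not_ge h
          have hy : 0 ≤ ∑ i, y i := Finset.sum_nonneg fun i _ => h2 i
          intro h3
          linarith
        rw [this]
        simp
    calc ∫⁻ t, volume (Prod.mk t ⁻¹' B)
        = ∫⁻ t in Set.Icc 0 c, ENNReal.ofReal ((c - t) ^ n / n.factorial) := by
          simp_rw [hslice]
          rw [lintegral_indicator measurableSet_Icc]
      _ = ENNReal.ofReal (∫ t in Set.Icc 0 c, (c - t) ^ n / n.factorial) := by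
          rw [← ofReal_integral_eq_lintegral_ofReal]
          · exact (((continuous_const.sub continuous_id).pow n).div_const _).integrableOn_Icc
          · exact ae_restrict_of_forall_mem measurableSet_Icc fun t ht => by
              have : 0 ≤ c - t := by linarith [ht.2]
              positivity
      _ = ENNReal.ofReal (c ^ (n+1) / (n+1).factorial) := by
          congr 1
          rw [MeasureTheory.integral_Icc_eq_integral_Ioc,
            ← intervalIntegral.integral_of_le hc, intervalIntegral.integral_div,
            intervalIntegral.integral_comp_sub_left (fun x => x ^ n) c]
          simp only [sub_zero, sub_self, integral_pow]
          rw [Nat.factorial_succ]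
          have hf : (n.factorial : ℝ) ≠ 0 := Nat.cast_ne_zero.2 n.factorial_ne_zero
          have hn : ((n:ℝ) + 1) ≠ 0 := by positivity
          push_cast
          field_simp
          simp
lemma vol_scaled (d : ℕ) (a : Fin d → ℝ) (ha : ∀ i, 0 < a i) :
    volume {x : Fin d → ℝ | (∀ i, 0 ≤ x i) ∧ ∑ i, x i / a i ≤ 1} =
      ENNReal.ofReal ((∏ i, a i) / d.factorial) := by
  set f : (Fin d → ℝ) →ₗ[ℝ] (Fin d → ℝ) := Matrix.toLin' (Matrix.diagonal a) with hf
  have hv : ∀ (x : Fin d → ℝ) i, f x i = a i * x i := fun x i => by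
    simp [hf, Matrix.toLin'_apply, Matrix.mulVec_diagonal]
  have himg : f '' {x | (∀ i, 0 ≤ x i) ∧ ∑ i, x i ≤ 1}
      = {x : Fin d → ℝ | (∀ i, 0 ≤ x i) ∧ ∑ i, x i / a i ≤ 1} := by
    ext y
    constructor
    · rintro ⟨x, ⟨hx0, hx1⟩, rfl⟩
      constructor
      · intro i; rw [hv x i]; exact mul_nonneg (ha i).le (hx0 i)
      · calc ∑ i, f x i / a i = ∑ i, x i := by
              refine Finset.sum_congr rfl fun i _ => ?_
              rw [hv x i, mul_div_cancel_left₀ _ (ha i).ne']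
          _ ≤ 1 := hx1
    · rintro ⟨hy0, hy1⟩
      refine ⟨fun i => y i / a i, ⟨fun i => div_nonneg (hy0 i) (ha i).le, hy1⟩, ?_⟩
      funext i
      rw [hv]
      exact mul_div_cancel₀ _ (ha i).ne'
  have hdet : f.det = ∏ i, a i := by
    rw [hf, LinearMap.det_toLin', Matrix.det_diagonal]
  rw [← himg, Measure.addHaar_image_linearMap, vol_corner d 1 zero_le_one, hdet,
    abs_of_pos (Finset.prod_pos fun i _ => ha i), one_pow,
    ← ENNReal.ofReal_mul (Finset.prod_pos fun i _ => ha i).le]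
  ring_nf
section syl
variable (s : ℕ → ℕ) (hs1 : s 1 = 2)
  (hs : ∀ i, 2 ≤ i → s i = (∏ j ∈ Finset.Icc 1 (i - 1), s j) + 1)

include hs1 hs in
lemma syl_two : ∀ j, 1 ≤ j → 2 ≤ s j := by
  intro j
  induction j using Nat.strong_induction_on with
  | _ j ih =>
    intro hj
    rcases eq_or_lt_of_le hj with h | h
    · rw [← h, hs1]
    · rw [hs j (by omega)]
      have : 1 ≤ ∏ i ∈ Finset.Icc 1 (j - 1), s i :=
        Finset.one_le_prod' fun i hi => by
          have := Finset.mem_Icc.1 hi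
          have := ih i (by omega) (by omega)
          omega
      omega

include hs1 hs in
lemma syl_sum : ∀ m, 1 ≤ m →
    ∑ j ∈ Finset.Icc 1 m, (1:ℝ) / (s j : ℝ) =
      1 - 1 / ∏ j ∈ Finset.Icc 1 m, (s j : ℝ) := by
  intro m hm
  induction m, hm using Nat.le_induction with
  | base => simp [hs1]; norm_num
  | succ m hm ih =>
    have hP : (0:ℝ) < ∏ j ∈ Finset.Icc 1 m, (s j : ℝ) :=
      Finset.prod_pos fun j hj => by
        have := Finset.mem_Icc.1 hj
        have := syl_two s hs1 hs j (by omega)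
        positivity
    have hsm : (s (m + 1) : ℝ) = (∏ j ∈ Finset.Icc 1 m, (s j : ℝ)) + 1 := by
      have := hs (m + 1) (by omega)
      simp only [Nat.add_sub_cancel] at this
      rw [this]
      push_cast
      ring
    rw [Finset.sum_Icc_succ_top (by omega), Finset.prod_Icc_succ_top (by omega), ih, hsm]
    field_simp
    ring

end syl

/-- For `d ≥ 2` and `k ≥ 0`, the simplex
`S^d_k = conv({0, s 1 • e 1, …, s (d-1) • e (d-1), (k+1)(s d - 1) • e d}) ⊂ ℝ^d`
contains exactly `k` integer points in its interior, and its volume is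
`(k+1)(s d - 1)² / d!`, where `s` is the Sylvester sequence. -/
theorem simplex_Sdk_interior_points_and_volume (d k : ℕ) (hd : 2 ≤ d)
    (s : ℕ → ℕ) (hs1 : s 1 = 2)
    (hs : ∀ i, 2 ≤ i → s i = (∏ j ∈ Finset.Icc 1 (i - 1), s j) + 1)
    (S : Set (Fin d → ℝ))
    (hS : S = convexHull ℝ (insert (0 : Fin d → ℝ)
      (Set.range (fun i : Fin d => fun j =>
        if j = i then
          (if (i : ℕ) < d - 1 then (s ((i : ℕ) + 1) : ℝ)
            else ((k : ℝ) + 1) * ((s d : ℝ) - 1))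
        else 0)))) :
    {q : Fin d → ℤ | (fun j => (q j : ℝ)) ∈ interior S}.ncard = k ∧
    (volume S).toReal = ((k : ℝ) + 1) * ((s d : ℝ) - 1) ^ 2 / (d.factorial : ℝ) := by
  obtain ⟨n, rfl⟩ : ∃ n, d = n + 1 := ⟨d - 1, by omega⟩
  have hn : 1 ≤ n := by omega
  set P : ℝ := (s (n + 1) : ℝ) - 1 with hPdef
  have hPprod : P = ∏ j ∈ Finset.Icc 1 n, (s j : ℝ) := by
    have h := hs (n + 1) (by omega)
    simp only [Nat.add_sub_cancel] at h
    rw [hPdef, h]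
    push_cast
    ring
  have hs2 : ∀ j, 1 ≤ j → (2:ℝ) ≤ (s j : ℝ) := fun j hj => by
    exact_mod_cast syl_two s hs1 hs j hj
  have hPpos : 0 < P := by
    rw [hPprod]
    exact Finset.prod_pos fun j hj => by
      have := Finset.mem_Icc.1 hj
      have := hs2 j (by omega)
      linarith
  set a : Fin (n + 1) → ℝ := fun i =>
    if (i : ℕ) < n then (s ((i : ℕ) + 1) : ℝ) else ((k : ℝ) + 1) * P with hadef
  have ha : ∀ i, 0 < a i := by
    intro i
    rw [hadef]
    dsimp only
    split
    · have := hs2 ((i : ℕ) + 1) (by omega); linarith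
    · positivity
  -- identify S with the inequality description
  have hfun : (fun i : Fin (n+1) => fun j =>
      if j = i then
        (if (i : ℕ) < (n+1) - 1 then (s ((i : ℕ) + 1) : ℝ)
          else ((k : ℝ) + 1) * ((s (n+1) : ℝ) - 1))
      else 0) = fun i => Pi.single i (a i) := by
    funext i j
    rw [Pi.single_apply]
    simp only [Nat.add_sub_cancel, ← hPdef, hadef]
  have hSeq : S = {x : Fin (n+1) → ℝ | (∀ i, 0 ≤ x i) ∧ ∑ i, x i / a i ≤ 1} := by
    rw [hS, hfun, corner_convexHull (n+1) a ha]
  -- sum of reciprocals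
  have hsum1 : ∑ i : Fin n, (1:ℝ) / (s ((i : ℕ) + 1) : ℝ) = 1 - 1 / P := by
    have h1 : ∑ i : Fin n, (1:ℝ) / (s ((i : ℕ) + 1) : ℝ)
        = ∑ j ∈ Finset.Icc 1 n, (1:ℝ) / (s j : ℝ) := by
      rw [Fin.sum_univ_eq_sum_range (fun i => (1:ℝ) / (s (i + 1) : ℝ)) n,
        ← Finset.Ico_add_one_right_eq_Icc, Finset.sum_Ico_eq_sum_range]
      simp [Nat.add_comm]
    rw [h1, syl_sum s hs1 hs n hn, ← hPprod]
  have hprodP : ∏ i : Fin n, (s ((i : ℕ) + 1) : ℝ) = P := by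
    rw [hPprod, Fin.prod_univ_eq_prod_range (fun i => (s (i + 1) : ℝ)) n,
      ← Finset.Ico_add_one_right_eq_Icc, Finset.prod_Ico_eq_prod_range]
    simp [Nat.add_comm]
  have hacast : ∀ i : Fin n, a i.castSucc = (s ((i : ℕ) + 1) : ℝ) := by
    intro i
    rw [hadef]
    simp [i.isLt]
  have halast : a (Fin.last n) = ((k : ℝ) + 1) * P := by
    rw [hadef]; simp
  have hkP : (0:ℝ) < ((k : ℝ) + 1) * P := by positivity
  -- key inequality
  have key : ∀ z : ℝ, ((1 - 1 / P) + z / (((k : ℝ) + 1) * P) < 1 ↔ z < (k : ℝ) + 1) := by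
    intro z
    rw [show (1 - 1 / P) + z / (((k : ℝ) + 1) * P)
        = 1 + (z - ((k : ℝ) + 1)) / (((k : ℝ) + 1) * P) from by
      field_simp; ring]
    have hiff : (z - ((k : ℝ) + 1)) / (((k : ℝ) + 1) * P) < 0 ↔ z < (k : ℝ) + 1 := by
      rw [div_lt_iff₀ hkP, zero_mul, sub_neg]
    constructor
    · intro h; exact hiff.1 (by linarith)
    · intro h; have := hiff.2 h; linarith
  have hsplit : ∀ q : Fin (n+1) → ℤ, (∀ i : Fin n, q i.castSucc = 1) →
      ∑ i, ((q i : ℝ)) / a i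
        = (1 - 1 / P) + ((q (Fin.last n) : ℝ)) / (((k : ℝ) + 1) * P) := by
    intro q hq1
    rw [Fin.sum_univ_castSucc]
    congr 1
    · rw [← hsum1]
      refine Finset.sum_congr rfl fun i _ => ?_
      rw [hq1 i, hacast i]
      norm_num
    · rw [halast]
  constructor
  · -- counting the interior integer points
    rw [hSeq, corner_interior (n+1) (by omega) a ha]
    have hset : {q : Fin (n+1) → ℤ | (fun j => ((q j : ℝ))) ∈
        {x : Fin (n+1) → ℝ | (∀ i, 0 < x i) ∧ ∑ i, x i / a i < 1}}
        = (fun m : ℤ => (fun i : Fin (n+1) => if (i : ℕ) < n then 1 else m)) ''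
            Set.Icc 1 (k : ℤ) := by
      ext q
      simp only [Set.mem_setOf_eq, Set.mem_image, Set.mem_Icc]
      constructor
      · rintro ⟨hq0, hq1⟩
        have hge1 : ∀ i, 1 ≤ q i := by
          intro i
          have h0 : (0:ℤ) < q i := by exact_mod_cast hq0 i
          omega
        have hone : ∀ i : Fin n, q i.castSucc = 1 := by
          by_contra hcon
          push_neg at hcon
          obtain ⟨i0, hi0⟩ := hcon
          have h2 : (2:ℝ) ≤ (q i0.castSucc : ℝ) := by
            have h1 := hge1 i0.castSucc
            have h2' : (2:ℤ) ≤ q i0.castSucc := by omega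
            exact_mod_cast h2'
          have hw : ∑ i, (if i = i0.castSucc then (2:ℝ) else 1) / a i
              ≤ ∑ i, ((q i : ℝ)) / a i := by
            refine Finset.sum_le_sum fun i _ => ?_
            rcases eq_or_ne i i0.castSucc with rfl | hne
            · rw [if_pos rfl]
              exact (div_le_div_iff_of_pos_right (ha _)).2 h2
            · rw [if_neg hne]
              have h1 : (1:ℝ) ≤ (q i : ℝ) := by exact_mod_cast hge1 i
              exact (div_le_div_iff_of_pos_right (ha i)).2 h1
          have hwsum : ∑ i, (if i = i0.castSucc then (2:ℝ) else 1) / a i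
              = (∑ i, 1 / a i) + 1 / a i0.castSucc := by
            have h3 : ∀ i : Fin (n+1), (if i = i0.castSucc then (2:ℝ) else 1) / a i
                = 1 / a i + (if i = i0.castSucc then 1 / a i else 0) := by
              intro i
              split
              · rw [← add_div]; norm_num
              · rw [add_zero]
            rw [Finset.sum_congr rfl fun i _ => h3 i, Finset.sum_add_distrib,
              Finset.sum_ite_eq' Finset.univ i0.castSucc]
            simp
          have hinv : ∑ i : Fin (n+1), 1 / a i = (1 - 1/P) + 1 / (((k:ℝ)+1)*P) := by
            rw [Fin.sum_univ_castSucc, halast]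
            congr 1
            rw [← hsum1]
            exact Finset.sum_congr rfl fun i _ => by rw [hacast i]
          have hbound : 1 / P ≤ 1 / a i0.castSucc := by
            apply one_div_le_one_div_of_le (ha i0.castSucc)
            rw [hacast i0, hPprod]
            have hmem : (i0 : ℕ) + 1 ∈ Finset.Icc 1 n :=
              Finset.mem_Icc.2 ⟨by omega, by have := i0.isLt; omega⟩
            have hnat : s ((i0:ℕ)+1) ≤ ∏ j ∈ Finset.Icc 1 n, s j := by
              refine Finset.single_le_prod' (fun j hj => ?_) hmem
              have := Finset.mem_Icc.1 hj
              have := syl_two s hs1 hs j (by omega)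
              omega
            calc ((s ((i0:ℕ)+1) : ℕ) : ℝ) ≤ ((∏ j ∈ Finset.Icc 1 n, s j : ℕ) : ℝ) := by
                  exact_mod_cast hnat
              _ = ∏ j ∈ Finset.Icc 1 n, (s j : ℝ) := by push_cast; rfl
          have hpos2 : (0:ℝ) < 1 / (((k:ℝ)+1)*P) := by positivity
          rw [hwsum, hinv] at hw
          linarith
        refine ⟨q (Fin.last n), ⟨hge1 _, ?_⟩, ?_⟩
        · have h5 := hq1
          rw [hsplit q hone] at h5
          have h3 : (q (Fin.last n) : ℝ) < (k:ℝ) + 1 := (key _).1 h5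
          have h4 : q (Fin.last n) < (k:ℤ) + 1 := by exact_mod_cast h3
          omega
        · funext i
          by_cases hi : (i : ℕ) < n
          · rw [if_pos hi]
            have he : Fin.castSucc ⟨(i:ℕ), hi⟩ = i := by ext; rfl
            rw [← he, hone]
          · rw [if_neg hi]
            have he : i = Fin.last n := by
              ext
              have := i.isLt
              simp only [Fin.val_last]
              omega
            rw [he]
      · rintro ⟨m, ⟨hm1, hmk⟩, rfl⟩
        have hone : ∀ i : Fin n, (fun i : Fin (n+1) => if (i : ℕ) < n then (1:ℤ) else m)
            i.castSucc = 1 := fun i => by simp [i.isLt]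
        constructor
        · intro i
          by_cases hi : (i : ℕ) < n
          · simp only [if_pos hi]
            norm_num
          · simp only [if_neg hi]
            have : (0:ℤ) < m := by omega
            exact_mod_cast this
        · rw [hsplit _ hone]
          refine (key _).2 ?_
          simp only [Fin.val_last, lt_self_iff_false, if_false]
          have : m < (k:ℤ) + 1 := by omega
          exact_mod_cast this
    rw [hset]
    have hinj : Function.Injective
        (fun m : ℤ => (fun i : Fin (n+1) => if (i : ℕ) < n then 1 else m)) := by
      intro x y h
      have := congrFun h (Fin.last n)
      simpa using this
    rw [Set.ncard_image_of_injective _ hinj, ← Finset.coe_Icc, Set.ncard_coe_finset,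
      Int.card_Icc]
    omega
  · -- volume
    rw [hSeq, vol_scaled (n+1) a ha]
    have hprod : ∏ i, a i = (((k:ℝ)+1) * P ^ 2) := by
      rw [Fin.prod_univ_castSucc, halast,
        Finset.prod_congr rfl fun (i : Fin n) _ => hacast i, hprodP]
      ring
    rw [hprod, ENNReal.toReal_ofReal (by positivity)]
end
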